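/- arXiv:1902.01525 — 6 statements merged into one kernel-verified Lean document; each statement's English description precedes it below -/
import Mathlib

section
/- Let (S, Σ) be a measurable space, {μ_n} a sequence of finite measures on S, and {f_n} a sequence of measurable extended-real-valued functions on S. Then there exists N ∈ ℕ such that the tail sequence {f_n}_{n≥N} is uniformly integrable with respect to {μ_n}_{n≥N} if and only if {f_n}_{n≥1} is asymptotically uniformly integrable with respect to {μ_n}_{n≥1}. -/
open MeasureTheory Filter Metric Topology
open scoped ENNReal

/-- The integral `∫_S |f(s)| 1{|f(s)| ≥ K} μ(ds)` (as a value in `ℝ≥0∞`). -/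
noncomputable def tailIntegral {S : Type*} [MeasurableSpace S]
    (μ : Measure S) (f : S → EReal) (K : ℝ) : ℝ≥0∞ :=
  ∫⁻ s in {s | (K : EReal) ≤ (f s).abs}, (f s).abs ∂μ

/-- `{f_n}` is asymptotically uniformly integrable w.r.t. `{μ_n}`:
`lim_{K→∞} limsup_n ∫ |f_n| 1{|f_n| ≥ K} dμ_n = 0`. -/
def AUI {S : Type*} [MeasurableSpace S] (μ : ℕ → Measure S) (f : ℕ → S → EReal) : Prop :=
  Tendsto (fun K : ℝ => limsup (fun n => tailIntegral (μ n) (f n) K) atTop) atTop (𝓝 0)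

/-- The tail sequence `{f_n}_{n ≥ N}` is uniformly integrable w.r.t. `{μ_n}_{n ≥ N}`:
`lim_{K→∞} sup_{n ≥ N} ∫ |f_n| 1{|f_n| ≥ K} dμ_n = 0`. -/
def UIFrom {S : Type*} [MeasurableSpace S] (μ : ℕ → Measure S) (f : ℕ → S → EReal)
    (N : ℕ) : Prop :=
  Tendsto (fun K : ℝ => ⨆ (n : ℕ) (_ : N ≤ n), tailIntegral (μ n) (f n) K) atTop (𝓝 0)

lemma EReal.measurable_abs' : Measurable EReal.abs :=
  EReal.measurable_of_measurable_real (by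
    simpa [EReal.abs_def] using (measurable_id.abs.ennreal_ofReal))

lemma tailSet_meas {S : Type*} [MeasurableSpace S] {f : S → EReal} (hf : Measurable f) (K : ℝ) :
    MeasurableSet {s | (K : EReal) ≤ (f s).abs} :=
  measurableSet_le measurable_const
    (measurable_coe_ennreal_ereal.comp (EReal.measurable_abs'.comp hf))

lemma tailIntegral_anti {S : Type*} [MeasurableSpace S] (μ : Measure S) (f : S → EReal) :
    Antitone (tailIntegral μ f) := by
  intro K K' h
  apply lintegral_mono_set
  intro s hs
  exact le_trans (EReal.coe_le_coe_iff.mpr h) hs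

lemma tailIntegral_tendsto {S : Type*} [MeasurableSpace S] (μ : Measure S) {f : S → EReal}
    (hf : Measurable f) {K₀ : ℝ} (hfin : tailIntegral μ f K₀ ≠ ∞) :
    Tendsto (tailIntegral μ f) atTop (𝓝 0) := by
  set g : S → ℝ≥0∞ := fun s => (f s).abs with hg
  have hgm : Measurable g := EReal.measurable_abs'.comp hf
  set A : ℝ → Set S := fun K => {s | (K : EReal) ≤ (f s).abs} with hA
  -- the ⊤-set has measure zero
  have hTsub : ∀ K : ℝ, {s | g s = ⊤} ⊆ A K := by
    intro K s hs
    simp only [A, Set.mem_setOf_eq]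
    rw [Set.mem_setOf_eq] at hs
    rw [show (f s).abs = g s from rfl, hs, EReal.coe_ennreal_top]
    exact le_top
  have hμT : μ {s | g s = ⊤} = 0 := by
    by_contra h
    apply hfin
    have hset : MeasurableSet {s | g s = ⊤} := hgm (measurableSet_singleton ⊤)
    have : ∫⁻ s in {s | g s = ⊤}, g s ∂μ = ⊤ := by
      have heq : ∫⁻ s in {s | g s = ⊤}, g s ∂μ = ∫⁻ _ in {s | g s = ⊤}, ⊤ ∂μ :=
        setLIntegral_congr_fun hset (fun s hs => hs)
      rw [heq, setLIntegral_const]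
      exact ENNReal.top_mul h
    have hle : ∫⁻ s in {s | g s = ⊤}, g s ∂μ ≤ tailIntegral μ f K₀ :=
      lintegral_mono_set (hTsub K₀)
    rw [this] at hle
    exact top_le_iff.mp hle
  -- indicator formulation
  have hind : ∀ K, tailIntegral μ f K = ∫⁻ s, (A K).indicator g s ∂μ := by
    intro K
    rw [lintegral_indicator (tailSet_meas hf K)]
    rfl
  have hiInf : ⨅ j : ℕ, tailIntegral μ f (K₀ + j) = 0 := by
    have hmeas : ∀ j : ℕ, Measurable fun s => (A (K₀ + j)).indicator g s :=
      fun j => hgm.indicator (tailSet_meas hf _)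
    have hanti : Antitone fun j : ℕ => fun s => (A (K₀ + j)).indicator g s := by
      intro j j' h
      intro s
      apply Set.indicator_le_indicator_of_subset _ (fun s => zero_le)
      intro t ht
      exact le_trans (EReal.coe_le_coe_iff.mpr (by exact_mod_cast add_le_add_right (Nat.cast_le.mpr h) K₀)) ht
    have h0 : ∫⁻ s, (A (K₀ + (0:ℕ))).indicator g s ∂μ ≠ ∞ := by
      rw [← hind]
      simpa using tailIntegral_anti μ f (le_add_of_nonneg_right (by norm_num) : K₀ ≤ K₀ + (0:ℕ)) |>.trans_lt (lt_top_iff_ne_top.mpr hfin) |>.ne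
    calc ⨅ j : ℕ, tailIntegral μ f (K₀ + j)
        = ∫⁻ s, ⨅ j : ℕ, (A (K₀ + j)).indicator g s ∂μ := by
          simp_rw [hind]; exact (lintegral_iInf hmeas hanti h0).symm
      _ = 0 := by
          rw [← lintegral_zero (μ := μ)]
          apply lintegral_congr_ae
          filter_upwards [measure_eq_zero_iff_ae_notMem.mp hμT] with s hs
          have hslt : g s < ⊤ := lt_top_iff_ne_top.mpr hs
          obtain ⟨j, hj⟩ := exists_nat_gt ((g s).toReal - K₀)
          have hjK : (g s).toReal < K₀ + j := by linarith
          apply le_antisymm _ zero_le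
          refine iInf_le_of_le j (le_of_eq ?_)
          apply Set.indicator_of_notMem
          simp only [A, Set.mem_setOf_eq]
          intro hc
          have hc' : ENNReal.ofReal (K₀ + j) ≤ g s := by
            have : ((ENNReal.ofReal (K₀ + j) : ℝ≥0∞) : EReal) = ((K₀ + j : ℝ) : EReal) := by
              rw [EReal.coe_ennreal_ofReal]
              norm_cast
              exact max_eq_left (le_of_lt (lt_of_le_of_lt ENNReal.toReal_nonneg hjK))
            rw [← EReal.coe_ennreal_le_coe_ennreal_iff, this]
            exact_mod_cast hc
          have hmono := ENNReal.toReal_mono hs hc'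
          have hnn : (0:ℝ) ≤ K₀ + j := le_of_lt (lt_of_le_of_lt ENNReal.toReal_nonneg hjK)
          rw [ENNReal.toReal_ofReal hnn] at hmono
          linarith
  -- conclude
  rw [ENNReal.tendsto_nhds_zero]
  intro ε hε
  have : ∃ j : ℕ, tailIntegral μ f (K₀ + j) < ε := by
    rw [← iInf_lt_iff, hiInf]; exact hε
  obtain ⟨j, hj⟩ := this
  filter_upwards [eventually_ge_atTop (K₀ + j)] with K hK
  exact le_trans (tailIntegral_anti μ f hK) hj.le

/-- Equivalence of uniform integrability of a tail and asymptotic uniform integrability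
(Feinberg, Kasyanov, Liang; Theorem 2.2 of FKL18). -/
theorem tail_uniform_integrable_iff_aui {S : Type*} [MeasurableSpace S]
    (μ : ℕ → Measure S) (hμ : ∀ n, IsFiniteMeasure (μ n))
    (f : ℕ → S → EReal) (hf : ∀ n, Measurable (f n)) :
    (∃ N : ℕ, UIFrom μ f N) ↔ AUI μ f := by
  constructor
  · rintro ⟨N, hN⟩
    refine tendsto_of_tendsto_of_tendsto_of_le_of_le tendsto_const_nhds hN
      (fun K => zero_le) (fun K => ?_)
    refine limsup_le_of_le (by isBoundedDefault) ?_
    filter_upwards [eventually_ge_atTop N] with n hn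
    exact le_iSup₂ (f := fun (n : ℕ) (_ : N ≤ n) => tailIntegral (μ n) (f n) K) n hn
  · intro h
    rw [AUI, ENNReal.tendsto_nhds_zero] at h
    -- find K₀ and N with uniform bound 2 on the tail
    obtain ⟨K₀, hK₀⟩ := (h 1 one_pos).exists
    have h2 : ∀ᶠ n in atTop, tailIntegral (μ n) (f n) K₀ < 2 :=
      eventually_lt_of_limsup_lt (lt_of_le_of_lt hK₀ (by norm_num : (1:ℝ≥0∞) < 2))
    obtain ⟨N, hNbd⟩ := h2.exists_forall_of_atTop
    refine ⟨N, ?_⟩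
    rw [UIFrom, ENNReal.tendsto_nhds_zero]
    intro ε hε
    set δ : ℝ≥0∞ := min ε 1 with hδ
    have hδ0 : δ ≠ 0 := (lt_min hε one_pos).ne'
    have hδtop : δ ≠ ∞ := ((min_le_right ε 1).trans_lt ENNReal.one_lt_top).ne
    have hδε : δ ≤ ε := min_le_left _ _
    -- get K₁ with limsup < δ
    obtain ⟨K₁, hK₁⟩ := (h (δ/2) (ENNReal.half_pos hδ0)).exists
    have hlt : limsup (fun n => tailIntegral (μ n) (f n) K₁) atTop < δ :=
      lt_of_le_of_lt hK₁ (ENNReal.half_lt_self hδ0 hδtop)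
    obtain ⟨M, hM⟩ := (eventually_lt_of_limsup_lt hlt).exists_forall_of_atTop
    -- for n in [N, M), use tendsto of each tailIntegral
    have hfin : ∀ n, N ≤ n → tailIntegral (μ n) (f n) K₀ ≠ ∞ :=
      fun n hn => (hNbd n hn).ne_top
    have hev : ∀ᶠ K in atTop, ∀ n ∈ Finset.Ico N M, tailIntegral (μ n) (f n) K ≤ ε := by
      rw [eventually_all_finset]
      intro n hn
      have := tailIntegral_tendsto (μ n) (hf n) (hfin n (Finset.mem_Ico.mp hn).1)
      rw [ENNReal.tendsto_nhds_zero] at this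
      exact this ε hε
    filter_upwards [hev, eventually_ge_atTop K₁] with K hK hKK₁
    refine iSup₂_le fun n hn => ?_
    rcases lt_or_ge n M with hnM | hnM
    · exact hK n (Finset.mem_Ico.mpr ⟨hn, hnM⟩)
    · exact le_trans (tailIntegral_anti (μ n) (f n) hKK₁) (le_trans (hM n hnM).le hδε)
end

section
/- Let S be a metric space, {μ_n} a sequence of measures on the Borel σ-field of S converging weakly to a finite measure μ, and {f_n} a sequence of measurable extended-real-valued functions on S. Suppose there exists a sequence of measurable real-valued functions {g_n} on S with f_n(s) ≥ g_n(s) for all n and all s ∈ S such that −∞ < ∫_S limsup_{n→∞, s'→s} g_n(s') μ(ds) ≤ liminf_{n→∞} ∫_S g_n(s) μ_n(ds). Then ∫_S liminf_{n→∞, s'→s} f_n(s') μ(ds) ≤ liminf_{n→∞} ∫_S f_n(s) μ_n(ds), provided all integrals appearing are defined. -/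
open MeasureTheory Filter Metric Topology
open scoped ENNReal

/-- The positive part of an extended real, as a value in `ℝ≥0∞`. -/
noncomputable def EReal.posENN (x : EReal) : ℝ≥0∞ := (max x 0).abs

/-- The negative part of an extended real, as a value in `ℝ≥0∞`. -/
noncomputable def EReal.negENN (x : EReal) : ℝ≥0∞ := (max (-x) 0).abs

/-- The integral of an extended-real-valued function: `∫ f⁺ dμ − ∫ f⁻ dμ` (in `EReal`). -/
noncomputable def eIntegral {S : Type*} [MeasurableSpace S]
    (μ : Measure S) (f : S → EReal) : EReal :=
  ((∫⁻ s, (f s).posENN ∂μ : ℝ≥0∞) : EReal) - ((∫⁻ s, (f s).negENN ∂μ : ℝ≥0∞) : EReal)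

/-- The integral of `f` w.r.t. `μ` is defined: at least one of `∫ f⁺ dμ`, `∫ f⁻ dμ` is finite. -/
def IntegralDefined {S : Type*} [MeasurableSpace S] (μ : Measure S) (f : S → EReal) : Prop :=
  (∫⁻ s, (f s).posENN ∂μ) ≠ ⊤ ∨ (∫⁻ s, (f s).negENN ∂μ) ≠ ⊤

/-- `{μ_n}` converges weakly to `μ`: integrals of bounded continuous functions converge. -/
def WeakConv {S : Type*} [MetricSpace S] [MeasurableSpace S]
    (μ : ℕ → Measure S) (ν : Measure S) : Prop :=
  ∀ g : BoundedContinuousFunction S ℝ,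
    Tendsto (fun n => ∫ s, g s ∂(μ n)) atTop (𝓝 (∫ s, g s ∂ν))

/-- The double lower limit `liminf_{n→∞, s'→s} f_n(s') =
`sup_{n, δ>0} inf_{k ≥ n, s' ∈ B_δ(s)} f_k(s')`. -/
noncomputable def dLiminf {S : Type*} [MetricSpace S] (f : ℕ → S → EReal) (s : S) : EReal :=
  ⨆ (n : ℕ) (δ : ℝ) (_ : 0 < δ),
    ⨅ (k : ℕ) (_ : n ≤ k) (s' : S) (_ : s' ∈ Metric.ball s δ), f k s'


/-- The double upper limit `limsup_{n→∞, s'→s} f_n(s')` =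
`inf_{n, δ>0} sup_{k ≥ n, s' ∈ B_δ(s)} f_k(s')`. -/
noncomputable def dLimsup {S : Type*} [MetricSpace S] (f : ℕ → S → EReal) (s : S) : EReal :=
  ⨅ (n : ℕ) (δ : ℝ) (_ : 0 < δ),
    ⨆ (k : ℕ) (_ : n ≤ k) (s' : S) (_ : s' ∈ Metric.ball s δ), f k s'

namespace EReal

lemma coe_max' (a b : ℝ) : ((max a b : ℝ) : EReal) = max (a : EReal) (b : EReal) :=
  EReal.coe_strictMono.monotone.map_max

lemma coe_max_zero (a : ℝ) : max (a : EReal) 0 = ((max a 0 : ℝ) : EReal) := by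
  rw [coe_max']; norm_num

lemma posENN_le_iff {x : EReal} {y : ℝ≥0∞} : x.posENN ≤ y ↔ x ≤ (y : EReal) := by
  induction x with
  | bot =>
    simp [EReal.posENN, max_eq_right (bot_le : (⊥:EReal) ≤ 0)]
  | coe r =>
    rw [EReal.posENN, coe_max_zero, EReal.abs_def]
    rw [abs_of_nonneg (le_max_right r 0)]
    induction y using ENNReal.recTopCoe with
    | top => simp [le_top]
    | coe c =>
      rw [EReal.coe_nnreal_eq_coe_real, ← ENNReal.ofReal_coe_nnreal,
        ENNReal.ofReal_le_ofReal_iff c.coe_nonneg, EReal.coe_le_coe_iff, max_le_iff]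
      simp [c.coe_nonneg]
  | top =>
    rw [EReal.posENN, max_eq_left (le_top : (0:EReal) ≤ ⊤)]
    simp [top_le_iff, EReal.coe_ennreal_eq_top_iff, eq_comm]

lemma gc_posENN : GaloisConnection EReal.posENN (fun y : ℝ≥0∞ => (y : EReal)) :=
  fun _ _ => posENN_le_iff

lemma posENN_mono : Monotone EReal.posENN := gc_posENN.monotone_l

@[simp] lemma posENN_coe (y : ℝ≥0∞) : EReal.posENN (y : EReal) = y := by
  induction y using ENNReal.recTopCoe with
  | top => simp [EReal.posENN, EReal.coe_ennreal_top, max_eq_left (le_top : (0:EReal) ≤ ⊤)]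
  | coe c =>
    rw [EReal.coe_nnreal_eq_coe_real, EReal.posENN, coe_max_zero, EReal.abs_def,
      abs_of_nonneg (le_max_right _ 0), max_eq_left c.coe_nonneg, ENNReal.ofReal_coe_nnreal]

lemma coe_posENN {x : EReal} (hx : 0 ≤ x) : ((x.posENN : ℝ≥0∞) : EReal) = x := by
  induction x with
  | bot => exact absurd hx (by simp)
  | coe r =>
    rw [EReal.posENN, coe_max_zero, EReal.abs_def, abs_of_nonneg (le_max_right r 0),
      EReal.coe_ennreal_ofReal, max_eq_left (le_max_right r 0)]
    rw [max_eq_left (EReal.coe_nonneg.mp hx : (0:ℝ) ≤ r)]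
  | top => simp [EReal.posENN, max_eq_left (le_top : (0:EReal) ≤ ⊤)]

lemma negENN_eq (x : EReal) : x.negENN = (-x).posENN := rfl

lemma negENN_of_nonneg {x : EReal} (hx : 0 ≤ x) : x.negENN = 0 := by
  have h : -x ≤ 0 := by rw [← neg_zero]; exact neg_le_neg_iff.2 hx
  rw [EReal.negENN, max_eq_right h, EReal.abs_zero]

lemma negENN_anti {x y : EReal} (h : x ≤ y) : y.negENN ≤ x.negENN := by
  rw [negENN_eq, negENN_eq]
  exact posENN_mono (neg_le_neg_iff.2 h)

lemma coe_ennreal_iInf {ι : Sort*} (d : ι → ℝ≥0∞) :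
    ((⨅ i, d i : ℝ≥0∞) : EReal) = ⨅ i, (d i : EReal) := gc_posENN.u_iInf

lemma coe_ennreal_iSup {ι : Sort*} [Nonempty ι] (d : ι → ℝ≥0∞) :
    ((⨆ i, d i : ℝ≥0∞) : EReal) = ⨆ i, (d i : EReal) := by
  refine le_antisymm ?_ (iSup_le fun i => EReal.coe_ennreal_le_coe_ennreal_iff.2 (le_iSup d i))
  rw [le_iSup_iff]
  intro b hb
  have hb0 : (0 : EReal) ≤ b :=
    le_trans (EReal.coe_ennreal_nonneg _) (hb (Classical.arbitrary ι))
  lift b to ℝ≥0∞ using hb0 with e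
  exact EReal.coe_ennreal_le_coe_ennreal_iff.2 (iSup_le fun i =>
    EReal.coe_ennreal_le_coe_ennreal_iff.1 (hb i))

lemma coe_ennreal_liminf (c : ℕ → ℝ≥0∞) :
    ((atTop.liminf c : ℝ≥0∞) : EReal) = atTop.liminf (fun k => (c k : EReal)) := by
  rw [Filter.liminf_eq_iSup_iInf_of_nat, Filter.liminf_eq_iSup_iInf_of_nat, coe_ennreal_iSup]
  exact iSup_congr fun n => by
    rw [coe_ennreal_iInf]
    exact iInf_congr fun i => coe_ennreal_iInf _

lemma coe_ennreal_ne_top {N : ℝ≥0∞} (h : N ≠ ⊤) : ((N : EReal)) ≠ ⊤ := by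
  simp [EReal.coe_ennreal_eq_top_iff, h]

lemma top_sub_of_ne_top {x : EReal} (h : x ≠ ⊤) : (⊤ : EReal) - x = ⊤ := by
  induction x with
  | bot => exact top_sub_bot
  | coe r => exact top_sub_coe r
  | top => exact absurd rfl h

end EReal

namespace EReal

lemma measurable_abs'_s2 : Measurable EReal.abs := by
  apply EReal.measurable_of_measurable_real
  simp only [EReal.abs_def]
  exact ENNReal.measurable_ofReal.comp continuous_abs.measurable

lemma measurable_posENN : Measurable EReal.posENN :=
  measurable_abs'_s2.comp (measurable_id.max measurable_const)

lemma measurable_negENN : Measurable EReal.negENN :=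
  measurable_posENN.comp measurable_neg

lemma coe_add_rep (a : ℝ≥0∞) (b : EReal) :
    (a : EReal) + b = if b = ⊥ then ⊥ else if b = ⊤ then ⊤
      else if a = ⊤ then ⊤ else ((a.toReal + b.toReal : ℝ) : EReal) := by
  induction b with
  | bot => simp [add_bot]
  | coe r =>
    simp only [EReal.coe_ne_bot, if_false, EReal.coe_ne_top, if_false]
    induction a using ENNReal.recTopCoe with
    | top => simp [EReal.coe_ennreal_top, top_add_coe]
    | coe c =>
      simp only [ENNReal.coe_ne_top, if_false, EReal.coe_nnreal_eq_coe_real]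
      rw [← EReal.coe_add]
      norm_num
  | top => simp [add_top_of_ne_bot (EReal.coe_ennreal_ne_bot a)]

lemma sub_coe_rep (a : EReal) (r : ℝ) :
    a - (r : EReal) = if a = ⊥ then ⊥ else if a = ⊤ then ⊤
      else ((a.toReal - r : ℝ) : EReal) := by
  induction a with
  | bot => simp [bot_sub]
  | coe x =>
    simp only [EReal.coe_ne_bot, if_false, EReal.coe_ne_top, if_false]
    rw [← EReal.coe_sub]
    norm_num
  | top => simp [top_sub_coe]

end EReal

section MeasAux

variable {S : Type*} [MeasurableSpace S]

lemma measurable_coe_ennreal_add {U : S → ℝ≥0∞} {G : S → EReal}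
    (hU : Measurable U) (hG : Measurable G) :
    Measurable fun s => (U s : EReal) + G s := by
  have hrep : (fun s => (U s : EReal) + G s) = fun s =>
      if G s = ⊥ then (⊥ : EReal) else if G s = ⊤ then ⊤
      else if U s = ⊤ then ⊤ else (((U s).toReal + (G s).toReal : ℝ) : EReal) := by
    funext s; exact EReal.coe_add_rep (U s) (G s)
  rw [hrep]
  refine Measurable.ite (hG (measurableSet_singleton ⊥)) measurable_const ?_
  refine Measurable.ite (hG (measurableSet_singleton ⊤)) measurable_const ?_
  refine Measurable.ite (hU (measurableSet_singleton ⊤)) measurable_const ?_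
  exact (hU.ennreal_toReal.add hG.ereal_toReal).coe_real_ereal

lemma measurable_sub_coe {f : S → EReal} {g : S → ℝ}
    (hf : Measurable f) (hg : Measurable g) :
    Measurable fun s => f s - (g s : EReal) := by
  have hrep : (fun s => f s - (g s : EReal)) = fun s =>
      if f s = ⊥ then (⊥ : EReal) else if f s = ⊤ then ⊤
      else (((f s).toReal - g s : ℝ) : EReal) := by
    funext s; exact EReal.sub_coe_rep (f s) (g s)
  rw [hrep]
  refine Measurable.ite (hf (measurableSet_singleton ⊥)) measurable_const ?_
  refine Measurable.ite (hf (measurableSet_singleton ⊤)) measurable_const ?_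
  exact (hf.ereal_toReal.sub hg).coe_real_ereal

end MeasAux

namespace EReal

@[simp] lemma posENN_bot : (⊥ : EReal).posENN = 0 := by
  rw [EReal.posENN, max_eq_right bot_le, EReal.abs_zero]

@[simp] lemma posENN_top : (⊤ : EReal).posENN = ⊤ := by
  rw [EReal.posENN, max_eq_left le_top]; rfl

@[simp] lemma negENN_bot : (⊥ : EReal).negENN = ⊤ := by
  rw [negENN_eq, EReal.neg_bot, posENN_top]

@[simp] lemma negENN_top : (⊤ : EReal).negENN = 0 := by
  rw [negENN_eq, EReal.neg_top, posENN_bot]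

lemma posENN_real (r : ℝ) : (r : EReal).posENN = ENNReal.ofReal r := by
  rw [EReal.posENN, coe_max_zero, EReal.abs_def, abs_of_nonneg (le_max_right r 0)]
  rcases le_total r 0 with h | h
  · simp [max_eq_right h, ENNReal.ofReal_of_nonpos h]
  · rw [max_eq_left h]

lemma negENN_real (r : ℝ) : (r : EReal).negENN = ENNReal.ofReal (-r) := by
  rw [negENN_eq, ← EReal.coe_neg, posENN_real]

private lemma ofReal_key {c r : ℝ} (hc : 0 ≤ c) :
    ENNReal.ofReal (c + r) + ENNReal.ofReal (-r)
      = ENNReal.ofReal c + ENNReal.ofReal r + ENNReal.ofReal (-(c + r)) := by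
  rcases le_total r 0 with hr | hr <;> rcases le_total (c + r) 0 with hcr | hcr
  · rw [ENNReal.ofReal_of_nonpos hcr, ENNReal.ofReal_of_nonpos hr, zero_add, add_zero,
      ← ENNReal.ofReal_add hc (by linarith)]
    congr 1; ring
  · rw [ENNReal.ofReal_of_nonpos hr, ENNReal.ofReal_of_nonpos (by linarith : -(c+r) ≤ 0),
      add_zero, add_zero, ← ENNReal.ofReal_add hcr (by linarith : (0:ℝ) ≤ -r)]
    congr 1; ring
  · have h1 : c + r = 0 := le_antisymm hcr (by linarith)
    have h2 : r = 0 := by linarith [le_antisymm (by linarith : c ≤ 0) hc]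
    have h3 : c = 0 := by linarith
    simp [h1, h2, h3]
  · rw [ENNReal.ofReal_of_nonpos (by linarith : -r ≤ 0),
      ENNReal.ofReal_of_nonpos (by linarith : -(c+r) ≤ 0), add_zero, add_zero,
      ← ENNReal.ofReal_add hc hr]

lemma key_identity (a : ℝ≥0∞) (b : EReal) :
    ((a : EReal) + b).posENN + b.negENN
      = a + b.posENN + ((a : EReal) + b).negENN := by
  induction b with
  | bot => simp [add_bot]
  | coe r =>
    induction a using ENNReal.recTopCoe with
    | top =>
      rw [EReal.coe_ennreal_top, top_add_coe, posENN_top, negENN_top]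
      simp
    | coe c =>
      rw [EReal.coe_nnreal_eq_coe_real, ← EReal.coe_add, posENN_real, posENN_real,
        negENN_real, negENN_real, ← ENNReal.ofReal_coe_nnreal]
      exact ofReal_key c.coe_nonneg
  | top =>
    rw [add_top_of_ne_bot (EReal.coe_ennreal_ne_bot a), posENN_top, negENN_top]
    simp

lemma coe_ennreal_eq_coe_toReal {x : ℝ≥0∞} (h : x ≠ ⊤) :
    (x : EReal) = ((x.toReal : ℝ) : EReal) := by
  lift x to NNReal using h
  simp [EReal.coe_nnreal_eq_coe_real]

end EReal

section EIntAux

open EReal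

variable {S : Type*} [MeasurableSpace S] {μ : Measure S}

lemma eIntegral_mono_ae {F G : S → EReal} (h : ∀ᵐ s ∂μ, F s ≤ G s) :
    eIntegral μ F ≤ eIntegral μ G := by
  refine EReal.sub_le_sub (EReal.coe_ennreal_le_coe_ennreal_iff.2 ?_)
    (EReal.coe_ennreal_le_coe_ennreal_iff.2 ?_)
  · exact lintegral_mono_ae (h.mono fun s hs => posENN_mono hs)
  · exact lintegral_mono_ae (h.mono fun s hs => negENN_anti hs)

lemma eIntegral_coe_ennreal (μ : Measure S) (F : S → ℝ≥0∞) :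
    eIntegral μ (fun s => (F s : EReal)) = ((∫⁻ s, F s ∂μ : ℝ≥0∞) : EReal) := by
  unfold eIntegral
  have h1 : ∀ s : S, ((F s : EReal)).posENN = F s := fun s => posENN_coe (F s)
  have h2 : ∀ s : S, ((F s : EReal)).negENN = 0 :=
    fun s => negENN_of_nonneg (EReal.coe_ennreal_nonneg (F s))
  simp only [h1, h2, lintegral_zero]
  rw [EReal.coe_ennreal_zero, sub_zero]

lemma eIntegral_coe_add {U : S → ℝ≥0∞} (hU : Measurable U) {G : S → EReal}
    (hG : Measurable G) (hNg : (∫⁻ s, (G s).negENN ∂μ) ≠ ⊤) :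
    eIntegral μ (fun s => (U s : EReal) + G s)
      = ((∫⁻ s, U s ∂μ : ℝ≥0∞) : EReal) + eIntegral μ G := by
  have hsum : Measurable fun s => (U s : EReal) + G s := measurable_coe_ennreal_add hU hG
  set A := ∫⁻ s, U s ∂μ with hA_def
  set P' := ∫⁻ s, ((U s : EReal) + G s).posENN ∂μ with hP'_def
  set N' := ∫⁻ s, ((U s : EReal) + G s).negENN ∂μ with hN'_def
  set Pg := ∫⁻ s, (G s).posENN ∂μ with hPg_def
  set Ng := ∫⁻ s, (G s).negENN ∂μ with hNg_def
  have hN'le : N' ≤ Ng := by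
    refine lintegral_mono fun s => negENN_anti ?_
    exact le_add_of_nonneg_left (EReal.coe_ennreal_nonneg (U s))
  have hN' : N' ≠ ⊤ := (lt_of_le_of_lt hN'le hNg.lt_top).ne
  have hm1 : Measurable fun s => ((U s : EReal) + G s).posENN :=
    measurable_posENN.comp hsum
  have hm2 : Measurable fun s => U s + (G s).posENN :=
    hU.add (measurable_posENN.comp hG)
  have hkey : P' + Ng = A + Pg + N' := by
    rw [hP'_def, hNg_def, hA_def, hPg_def, hN'_def,
      ← lintegral_add_left hm1, ← lintegral_add_left hU, ← lintegral_add_left hm2]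
    exact lintegral_congr fun s => key_identity (U s) (G s)
  show ((P' : ℝ≥0∞) : EReal) - N' = (A : EReal) + (((Pg : ℝ≥0∞) : EReal) - Ng)
  by_cases hPg' : Pg = ⊤
  · have hP' : P' = ⊤ := by
      have : P' + Ng = ⊤ := by rw [hkey, hPg']; simp [ENNReal.add_eq_top]
      rcases ENNReal.add_eq_top.1 this with h | h
      · exact h
      · exact absurd h hNg
    rw [hP', hPg', EReal.coe_ennreal_top, top_sub_of_ne_top (coe_ennreal_ne_top hNg),
      top_sub_of_ne_top (coe_ennreal_ne_top hN'),
      add_top_of_ne_bot (EReal.coe_ennreal_ne_bot A)]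
  by_cases hA' : A = ⊤
  · have hP' : P' = ⊤ := by
      have : P' + Ng = ⊤ := by rw [hkey, hA']; simp [ENNReal.add_eq_top]
      rcases ENNReal.add_eq_top.1 this with h | h
      · exact h
      · exact absurd h hNg
    have hsub_ne_bot : ((Pg : ℝ≥0∞) : EReal) - Ng ≠ ⊥ := by
      rw [sub_eq_add_neg]
      intro hcon
      rcases EReal.add_eq_bot_iff.1 hcon with h | h
      · exact EReal.coe_ennreal_ne_bot _ h
      · rw [EReal.neg_eq_bot_iff] at h
        exact coe_ennreal_ne_top hNg h
    rw [hP', hA', EReal.coe_ennreal_top, top_sub_of_ne_top (coe_ennreal_ne_top hN'),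
      top_add_of_ne_bot hsub_ne_bot]
  · -- all finite
    have hP' : P' ≠ ⊤ := by
      intro hcon
      have : P' + Ng = ⊤ := by rw [hcon]; simp [ENNReal.add_eq_top]
      rw [hkey] at this
      rcases ENNReal.add_eq_top.1 this with h | h
      · rcases ENNReal.add_eq_top.1 h with h' | h'
        · exact hA' h'
        · exact hPg' h'
      · exact hN' h
    have hreal := congrArg ENNReal.toReal hkey
    rw [ENNReal.toReal_add hP' hNg, ENNReal.toReal_add (ENNReal.add_ne_top.2 ⟨hA', hPg'⟩) hN',
      ENNReal.toReal_add hA' hPg'] at hreal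
    rw [coe_ennreal_eq_coe_toReal hP', coe_ennreal_eq_coe_toReal hN',
      coe_ennreal_eq_coe_toReal hA', coe_ennreal_eq_coe_toReal hPg',
      coe_ennreal_eq_coe_toReal hNg, ← EReal.coe_sub, ← EReal.coe_sub, ← EReal.coe_add,
      EReal.coe_eq_coe_iff]
    linarith

end EIntAux

section Portmanteau

variable {S : Type*} [MetricSpace S] [MeasurableSpace S] [BorelSpace S]

lemma weakConv_open_le {μ : ℕ → Measure S} {ν : Measure S} [IsFiniteMeasure ν]
    (hw : WeakConv μ ν) {G : Set S} (hG : IsOpen G) :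
    ν G ≤ atTop.liminf fun k => μ k G := by
  have key : ∀ F : BoundedContinuousFunction S ℝ, (∀ s, 0 ≤ F s) →
      (∀ s, ENNReal.ofReal (F s) ≤ Set.indicator G (fun _ => (1 : ℝ≥0∞)) s) →
      ENNReal.ofReal (∫ s, F s ∂ν) ≤ atTop.liminf fun k => μ k G := by
    intro F hFnn hFle
    have h1 : ∀ k : ℕ, ENNReal.ofReal (∫ s, F s ∂(μ k)) ≤ μ k G := by
      intro k
      by_cases hi : Integrable F (μ k)
      · rw [MeasureTheory.ofReal_integral_eq_lintegral_ofReal hi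
          (Filter.Eventually.of_forall hFnn)]
        calc ∫⁻ s, ENNReal.ofReal (F s) ∂(μ k)
            ≤ ∫⁻ s, Set.indicator G (fun _ => (1 : ℝ≥0∞)) s ∂(μ k) := lintegral_mono hFle
          _ = μ k G := lintegral_indicator_one hG.measurableSet
      · rw [integral_undef hi]; simp
    have h2 : Tendsto (fun k => ENNReal.ofReal (∫ s, F s ∂(μ k))) atTop
        (𝓝 (ENNReal.ofReal (∫ s, F s ∂ν))) :=
      (ENNReal.continuous_ofReal.tendsto _).comp (hw F)
    rw [← h2.liminf_eq]
    exact Filter.liminf_le_liminf (Filter.Eventually.of_forall h1)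
  rcases Set.eq_empty_or_nonempty Gᶜ with hc | hc
  · have hGuniv : G = Set.univ := by
      rw [← Set.compl_empty_iff]; exact hc
    subst hGuniv
    have h := key (BoundedContinuousFunction.const S (1 : ℝ)) (fun s => zero_le_one)
      (fun s => by simp)
    simp only [BoundedContinuousFunction.const_apply',
      MeasureTheory.integral_const, smul_eq_mul, mul_one] at h
    rwa [measureReal_def, ENNReal.ofReal_toReal (measure_ne_top ν _)] at h
  · have hcont : ∀ m : ℕ, Continuous fun s => min 1 ((m : ℝ) * Metric.infDist s Gᶜ) :=
      fun m => continuous_const.min (continuous_const.mul (Metric.continuous_infDist_pt Gᶜ))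
    have hnn : ∀ (m : ℕ) (s : S), 0 ≤ min 1 ((m : ℝ) * Metric.infDist s Gᶜ) :=
      fun m s => le_min zero_le_one (mul_nonneg (Nat.cast_nonneg m) Metric.infDist_nonneg)
    have hle1 : ∀ (m : ℕ) (s : S), min 1 ((m : ℝ) * Metric.infDist s Gᶜ) ≤ 1 :=
      fun m s => min_le_left _ _
    set Fm : ℕ → BoundedContinuousFunction S ℝ := fun m =>
      BoundedContinuousFunction.mkOfBound ⟨fun s => min 1 ((m : ℝ) * Metric.infDist s Gᶜ),
        hcont m⟩ 1
        (fun x y => by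
          rw [Real.dist_eq, abs_sub_le_iff]
          constructor
          · have := hnn m y; have := hle1 m x; simp only [ContinuousMap.coe_mk]; linarith
          · have := hnn m x; have := hle1 m y; simp only [ContinuousMap.coe_mk]; linarith)
      with hFm_def
    have hFm : ∀ m s, Fm m s = min 1 ((m : ℝ) * Metric.infDist s Gᶜ) := fun m s => rfl
    have hFle : ∀ m s, ENNReal.ofReal (Fm m s) ≤ Set.indicator G (fun _ => (1 : ℝ≥0∞)) s := by
      intro m s
      by_cases hs : s ∈ G
      · rw [Set.indicator_of_mem hs, hFm]
        calc ENNReal.ofReal (min 1 ((m : ℝ) * Metric.infDist s Gᶜ))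
            ≤ ENNReal.ofReal 1 := ENNReal.ofReal_le_ofReal (hle1 m s)
          _ = 1 := ENNReal.ofReal_one
      · rw [Set.indicator_of_notMem hs, hFm]
        have hd : Metric.infDist s Gᶜ = 0 := Metric.infDist_zero_of_mem (by simpa using hs)
        simp [hd]
    have hsup : ∀ s, (⨆ m : ℕ, ENNReal.ofReal (Fm m s))
        = Set.indicator G (fun _ => (1 : ℝ≥0∞)) s := by
      intro s
      by_cases hs : s ∈ G
      · rw [Set.indicator_of_mem hs]
        refine le_antisymm (iSup_le fun m => by
          calc ENNReal.ofReal (Fm m s) ≤ ENNReal.ofReal 1 :=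
                ENNReal.ofReal_le_ofReal (by rw [hFm]; exact hle1 m s)
            _ = 1 := ENNReal.ofReal_one) ?_
        have hd : 0 < Metric.infDist s Gᶜ :=
          (hG.isClosed_compl.notMem_iff_infDist_pos hc).1 (by simpa using hs)
        obtain ⟨m, hm⟩ := exists_nat_ge (1 / Metric.infDist s Gᶜ)
        have h1m : 1 ≤ (m : ℝ) * Metric.infDist s Gᶜ := by
          rw [div_le_iff₀ hd] at hm; linarith
        refine le_iSup_of_le m ?_
        rw [hFm, min_eq_left h1m, ENNReal.ofReal_one]
      · rw [Set.indicator_of_notMem hs]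
        have hd : Metric.infDist s Gᶜ = 0 := Metric.infDist_zero_of_mem (by simpa using hs)
        simp only [hFm, hd, mul_zero]
        simp
    have hmeas : ∀ m : ℕ, Measurable fun s => ENNReal.ofReal (Fm m s) :=
      fun m => ((Fm m).continuous.measurable).ennreal_ofReal
    have hmono : Monotone fun (m : ℕ) (s : S) => ENNReal.ofReal (Fm m s) := by
      intro m1 m2 h
      intro s
      apply ENNReal.ofReal_le_ofReal
      rw [hFm, hFm]
      exact min_le_min le_rfl (mul_le_mul_of_nonneg_right (Nat.cast_le.2 h)
        Metric.infDist_nonneg)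
    calc ν G = ∫⁻ s, Set.indicator G (fun _ => (1 : ℝ≥0∞)) s ∂ν :=
          (lintegral_indicator_one hG.measurableSet).symm
      _ = ∫⁻ s, ⨆ m : ℕ, ENNReal.ofReal (Fm m s) ∂ν :=
          lintegral_congr fun s => (hsup s).symm
      _ = ⨆ m : ℕ, ∫⁻ s, ENNReal.ofReal (Fm m s) ∂ν := lintegral_iSup hmeas hmono
      _ ≤ atTop.liminf fun k => μ k G := by
          refine iSup_le fun m => ?_
          rw [← MeasureTheory.ofReal_integral_eq_lintegral_ofReal ((Fm m).integrable ν)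
            (Filter.Eventually.of_forall fun s => by rw [hFm]; exact hnn m s)]
          exact key (Fm m) (fun s => by rw [hFm]; exact hnn m s) (hFle m)

end Portmanteau

section Core

variable {S : Type*} [MetricSpace S] [MeasurableSpace S] [BorelSpace S]

lemma lsc_lintegral_le_liminf {ν : Measure S} {μs : ℕ → Measure S}
    (hopen : ∀ G : Set S, IsOpen G → ν G ≤ atTop.liminf fun k => μs k G)
    {ψ : S → ℝ≥0∞} (hψm : Measurable ψ) (hψ : LowerSemicontinuous ψ) :
    ∫⁻ s, ψ s ∂ν ≤ atTop.liminf fun k => ∫⁻ s, ψ s ∂(μs k) := by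
  have trunc : ∀ M : ℕ,
      ∫⁻ s, min (ψ s) M ∂ν ≤ atTop.liminf fun k => ∫⁻ s, ψ s ∂(μs k) := by
    intro M
    set f : S → ℝ := fun s => (min (ψ s) M).toReal with hf_def
    have hf_nn : ∀ s, 0 ≤ f s := fun s => ENNReal.toReal_nonneg
    have hne : ∀ s, min (ψ s) (M : ℝ≥0∞) ≠ ⊤ :=
      fun s => ne_top_of_le_ne_top (ENNReal.natCast_ne_top M) (min_le_right _ _)
    have hofReal : ∀ s, ENNReal.ofReal (f s) = min (ψ s) M :=
      fun s => ENNReal.ofReal_toReal (hne s)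
    have hfm : Measurable f := (hψm.min measurable_const).ennreal_toReal
    have hsetdesc : ∀ t : ℝ, 0 ≤ t →
        {a : S | t < f a} = {a : S | ENNReal.ofReal t < min (ψ a) M} := by
      intro t ht
      ext a
      simp only [Set.mem_setOf_eq]
      rw [ENNReal.ofReal_lt_iff_lt_toReal ht (hne a)]
    have hsets : ∀ t : ℝ, 0 < t → IsOpen {a : S | t < f a} := by
      intro t ht
      rw [hsetdesc t ht.le]
      rcases lt_or_ge (ENNReal.ofReal t) (M : ℝ≥0∞) with hM | hM
      · have : {a : S | ENNReal.ofReal t < min (ψ a) M} = ψ ⁻¹' Set.Ioi (ENNReal.ofReal t) := by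
          ext a
          simp only [Set.mem_setOf_eq, Set.mem_preimage, Set.mem_Ioi, lt_min_iff]
          exact ⟨fun h => h.1, fun h => ⟨h, hM⟩⟩
        rw [this]
        exact lowerSemicontinuous_iff_isOpen_preimage.1 hψ _
      · have : {a : S | ENNReal.ofReal t < min (ψ a) M} = ∅ := by
          ext a
          simp only [Set.mem_setOf_eq, Set.mem_empty_iff_false, iff_false, not_lt, lt_min_iff]
          exact fun h => absurd hM (not_le.2 h.2)
        rw [this]
        exact isOpen_empty
    have hμmeas : ∀ k : ℕ, Measurable fun t : ℝ => μs k {a : S | t < f a} := by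
      intro k
      exact Antitone.measurable fun t1 t2 h =>
        measure_mono fun a ha => lt_of_le_of_lt h ha
    calc ∫⁻ s, min (ψ s) M ∂ν
        = ∫⁻ s, ENNReal.ofReal (f s) ∂ν := lintegral_congr fun s => (hofReal s).symm
      _ = ∫⁻ t in Set.Ioi 0, ν {a : S | t < f a} :=
          lintegral_eq_lintegral_meas_lt ν (Filter.Eventually.of_forall hf_nn) hfm.aemeasurable
      _ ≤ ∫⁻ t in Set.Ioi 0, atTop.liminf fun k => μs k {a : S | t < f a} := by
          refine lintegral_mono_ae ((ae_restrict_iff' measurableSet_Ioi).2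
            (Filter.Eventually.of_forall fun t ht => ?_))
          exact hopen _ (hsets t ht)
      _ ≤ atTop.liminf fun k => ∫⁻ t in Set.Ioi 0, μs k {a : S | t < f a} :=
          lintegral_liminf_le hμmeas
      _ = atTop.liminf fun k => ∫⁻ s, ENNReal.ofReal (f s) ∂(μs k) := by
          have heq : ∀ k : ℕ, (∫⁻ t in Set.Ioi 0, μs k {a : S | t < f a})
              = ∫⁻ s, ENNReal.ofReal (f s) ∂(μs k) := fun k =>
            (lintegral_eq_lintegral_meas_lt (μs k) (Filter.Eventually.of_forall hf_nn)
              hfm.aemeasurable).symm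
          simp only [heq]
      _ ≤ atTop.liminf fun k => ∫⁻ s, ψ s ∂(μs k) := by
          refine Filter.liminf_le_liminf (Filter.Eventually.of_forall fun k => ?_)
          refine lintegral_mono fun s => ?_
          rw [hofReal s]
          exact min_le_left _ _
  have hsup : ∀ s, (⨆ M : ℕ, min (ψ s) M) = ψ s := by
    intro s
    rcases eq_or_ne (ψ s) ⊤ with h | h
    · rw [h]
      have : ∀ M : ℕ, min (⊤ : ℝ≥0∞) M = M := fun M => min_eq_right le_top
      simp only [this]
      exact ENNReal.iSup_natCast
    · obtain ⟨M, hM⟩ := ENNReal.exists_nat_gt h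
      refine le_antisymm (iSup_le fun M => min_le_left _ _) (le_iSup_of_le M ?_)
      rw [min_eq_left hM.le]
  calc ∫⁻ s, ψ s ∂ν = ∫⁻ s, ⨆ M : ℕ, min (ψ s) M ∂ν :=
        lintegral_congr fun s => (hsup s).symm
    _ = ⨆ M : ℕ, ∫⁻ s, min (ψ s) M ∂ν :=
        lintegral_iSup (fun M => hψm.min measurable_const)
          (fun M1 M2 h s => min_le_min le_rfl (Nat.cast_le.2 h))
    _ ≤ atTop.liminf fun k => ∫⁻ s, ψ s ∂(μs k) := iSup_le trunc

end Core

section Core2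

variable {S : Type*} [MetricSpace S] [MeasurableSpace S] [BorelSpace S]

/-- inner inf for the core lemma -/
noncomputable def psiInner (H : ℕ → S → ℝ≥0∞) (n : ℕ) (δ : ℝ) (s : S) : ℝ≥0∞ :=
  ⨅ (k : ℕ) (_ : n ≤ k) (s' : S) (_ : s' ∈ Metric.ball s δ), H k s'

/-- the inner liminf-type function for the core lemma -/
noncomputable def psiFun (H : ℕ → S → ℝ≥0∞) (n : ℕ) (s : S) : ℝ≥0∞ :=
  ⨆ (δ : ℝ) (_ : 0 < δ), psiInner H n δ s

lemma psiInner_mono_refine (H : ℕ → S → ℝ≥0∞) {n n' : ℕ} (hn : n ≤ n') {δ δ' : ℝ}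
    (hδ : δ' ≤ δ) {s t : S} (hst : Metric.ball t δ' ⊆ Metric.ball s δ) :
    psiInner H n δ s ≤ psiInner H n' δ' t := by
  refine le_iInf fun k => le_iInf fun hk => le_iInf fun s' => le_iInf fun hs' => ?_
  refine iInf_le_of_le k (iInf_le_of_le (le_trans hn hk) (iInf_le_of_le s'
    (iInf_le_of_le (hst hs') le_rfl)))

lemma psiFun_lsc (H : ℕ → S → ℝ≥0∞) (n : ℕ) : LowerSemicontinuous (psiFun H n) := by
  intro s y hy
  rw [psiFun, gt_iff_lt, lt_iSup_iff] at hy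
  obtain ⟨δ, hy⟩ := hy
  rw [lt_iSup_iff] at hy
  obtain ⟨hδ, hy⟩ := hy
  filter_upwards [Metric.ball_mem_nhds s (half_pos hδ)] with t ht
  have h1 : psiInner H n δ s ≤ psiInner H n (δ / 2) t := by
    refine psiInner_mono_refine H le_rfl (by linarith : δ / 2 ≤ δ) ?_
    intro x hx
    rw [Metric.mem_ball] at hx ht ⊢
    calc dist x s ≤ dist x t + dist t s := dist_triangle x t s
      _ < δ / 2 + δ / 2 := add_lt_add hx ht
      _ = δ := by ring
  have h2 : psiInner H n (δ / 2) t ≤ psiFun H n t :=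
    le_iSup_of_le (δ / 2) (le_iSup_of_le (half_pos hδ) le_rfl)
  exact lt_of_lt_of_le hy (h1.trans h2)

lemma psiFun_le (H : ℕ → S → ℝ≥0∞) {n k : ℕ} (hk : n ≤ k) (s : S) :
    psiFun H n s ≤ H k s := by
  refine iSup_le fun δ => iSup_le fun hδ => ?_
  exact iInf_le_of_le k (iInf_le_of_le hk (iInf_le_of_le s
    (iInf_le_of_le (Metric.mem_ball_self hδ) le_rfl)))

lemma psiFun_monotone (H : ℕ → S → ℝ≥0∞) : Monotone (psiFun H) := by
  intro n n' hn s
  refine iSup_le fun δ => iSup_le fun hδ => ?_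
  exact le_iSup_of_le δ (le_iSup_of_le hδ (psiInner_mono_refine H hn le_rfl (subset_refl _)))

lemma psiFun_measurable (H : ℕ → S → ℝ≥0∞) (n : ℕ) : Measurable (psiFun H n) :=
  (psiFun_lsc H n).measurable

lemma core_nonneg {μ : ℕ → Measure S} {ν : Measure S} [IsFiniteMeasure ν]
    (hw : WeakConv μ ν) (H : ℕ → S → ℝ≥0∞) :
    ∫⁻ s, ⨆ n : ℕ, psiFun H n s ∂ν ≤ atTop.liminf fun k => ∫⁻ s, H k s ∂(μ k) := by
  have hopen : ∀ G : Set S, IsOpen G → ν G ≤ atTop.liminf fun k => μ k G :=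
    fun G hG => weakConv_open_le hw hG
  rw [lintegral_iSup (psiFun_measurable H) (fun n n' h s => psiFun_monotone H h s)]
  refine iSup_le fun n => ?_
  calc ∫⁻ s, psiFun H n s ∂ν
      ≤ atTop.liminf fun k => ∫⁻ s, psiFun H n s ∂(μ k) :=
        lsc_lintegral_le_liminf hopen (psiFun_measurable H n) (psiFun_lsc H n)
    _ ≤ atTop.liminf fun k => ∫⁻ s, H k s ∂(μ k) := by
        refine Filter.liminf_le_liminf (Filter.eventually_atTop.2 ⟨n, fun k hk => ?_⟩)
        exact lintegral_mono fun s => psiFun_le H hk s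

end Core2

section DLimsupMeas

variable {S : Type*} [MetricSpace S] [MeasurableSpace S] [BorelSpace S]

noncomputable def supInner (f : ℕ → S → EReal) (n : ℕ) (δ : ℝ) (s : S) : EReal :=
  ⨆ (k : ℕ) (_ : n ≤ k) (s' : S) (_ : s' ∈ Metric.ball s δ), f k s'

noncomputable def infInner (f : ℕ → S → EReal) (n : ℕ) (δ : ℝ) (s : S) : EReal :=
  ⨅ (k : ℕ) (_ : n ≤ k) (s' : S) (_ : s' ∈ Metric.ball s δ), f k s'

lemma dLimsup_eq (f : ℕ → S → EReal) (s : S) :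
    dLimsup f s = ⨅ (n : ℕ) (δ : ℝ) (_ : 0 < δ), supInner f n δ s := rfl

lemma dLiminf_eq (f : ℕ → S → EReal) (s : S) :
    dLiminf f s = ⨆ (n : ℕ) (δ : ℝ) (_ : 0 < δ), infInner f n δ s := rfl

lemma supInner_lsc (f : ℕ → S → EReal) (n : ℕ) (δ : ℝ) :
    LowerSemicontinuous (fun s => supInner f n δ s) := by
  intro s y hy
  simp only [supInner] at hy
  rw [gt_iff_lt, lt_iSup_iff] at hy
  obtain ⟨k, hy⟩ := hy
  rw [lt_iSup_iff] at hy
  obtain ⟨hk, hy⟩ := hy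
  rw [lt_iSup_iff] at hy
  obtain ⟨s', hy⟩ := hy
  rw [lt_iSup_iff] at hy
  obtain ⟨hs', hy⟩ := hy
  filter_upwards [Metric.isOpen_ball.mem_nhds (Metric.mem_ball_comm.1 hs')] with t ht
  exact lt_of_lt_of_le hy (le_iSup_of_le k (le_iSup_of_le hk (le_iSup_of_le s'
    (le_iSup_of_le (Metric.mem_ball_comm.1 ht) le_rfl))))

lemma supInner_mono_delta (f : ℕ → S → EReal) {n n' : ℕ} (hn : n ≤ n') {δ δ' : ℝ}
    (hδ : δ' ≤ δ) (s : S) : supInner f n' δ' s ≤ supInner f n δ s := by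
  refine iSup_le fun k => iSup_le fun hk => iSup_le fun s' => iSup_le fun hs' => ?_
  exact le_iSup_of_le k (le_iSup_of_le (le_trans hn hk) (le_iSup_of_le s'
    (le_iSup_of_le (Metric.ball_subset_ball hδ hs') le_rfl)))

lemma dLimsup_eq_rat (f : ℕ → S → EReal) (s : S) :
    dLimsup f s = ⨅ (n : ℕ) (q : ℚ) (_ : 0 < (q : ℝ)), supInner f n (q : ℝ) s := by
  rw [dLimsup_eq]
  refine le_antisymm ?_ ?_
  · refine le_iInf fun n => le_iInf fun q => le_iInf fun hq => ?_
    exact iInf_le_of_le n (iInf_le_of_le (q : ℝ) (iInf_le_of_le hq le_rfl))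
  · refine le_iInf fun n => le_iInf fun δ => le_iInf fun hδ => ?_
    obtain ⟨q, hq0, hqδ⟩ := exists_rat_btwn hδ
    have hq0' : (0 : ℝ) < (q : ℝ) := by exact_mod_cast hq0
    exact iInf_le_of_le n (iInf_le_of_le q (iInf_le_of_le hq0'
      (supInner_mono_delta f le_rfl hqδ.le s)))

lemma dLimsup_measurable (f : ℕ → S → EReal) :
    Measurable fun s => dLimsup f s := by
  have : (fun s => dLimsup f s)
      = fun s => ⨅ (n : ℕ) (q : ℚ) (_ : 0 < (q : ℝ)), supInner f n (q : ℝ) s := by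
    funext s; exact dLimsup_eq_rat f s
  rw [this]
  exact Measurable.iInf fun n => Measurable.iInf fun q => Measurable.iInf fun hq =>
    (supInner_lsc f n (q : ℝ)).measurable

lemma coe_psiInner (H : ℕ → S → ℝ≥0∞) (n : ℕ) (δ : ℝ) (s : S) :
    ((psiInner H n δ s : ℝ≥0∞) : EReal)
      = infInner (fun k s' => ((H k s' : ℝ≥0∞) : EReal)) n δ s := by
  simp only [psiInner, infInner]
  rw [EReal.coe_ennreal_iInf]
  refine iInf_congr fun k => ?_
  rw [EReal.coe_ennreal_iInf]
  refine iInf_congr fun hk => ?_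
  rw [EReal.coe_ennreal_iInf]
  refine iInf_congr fun s' => ?_
  rw [EReal.coe_ennreal_iInf]

end DLimsupMeas


/-- Fatou's lemma for weakly converging measures with minorants
(Feinberg–Kasyanov–Liang, Theorem 2.4(ii) / Corollary 2.7). -/
theorem fatou_weak_minorant {S : Type*} [MetricSpace S] [MeasurableSpace S] [BorelSpace S]
    (μ : ℕ → Measure S) (ν : Measure S) [IsFiniteMeasure ν] (hw : WeakConv μ ν)
    (f : ℕ → S → EReal) (hf : ∀ n, Measurable (f n))
    (g : ℕ → S → ℝ) (hg : ∀ n, Measurable (g n))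
    (hfg : ∀ n s, ((g n s : ℝ) : EReal) ≤ f n s)
    (hgbd : (⊥ : EReal) < eIntegral ν (fun s => dLimsup (fun n s' => ((g n s' : ℝ) : EReal)) s))
    (hgle : eIntegral ν (fun s => dLimsup (fun n s' => ((g n s' : ℝ) : EReal)) s)
      ≤ liminf (fun n => eIntegral (μ n) (fun s => ((g n s : ℝ) : EReal))) atTop)
    (hdef : ∀ n, IntegralDefined (μ n) (f n))
    (hdef' : IntegralDefined ν (fun s => dLiminf f s))
    (hdefg : ∀ n, IntegralDefined (μ n) (fun s => ((g n s : ℝ) : EReal)))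
    (hdefg' : IntegralDefined ν (fun s => dLimsup (fun n s' => ((g n s' : ℝ) : EReal)) s)) :
    eIntegral ν (fun s => dLiminf f s) ≤ liminf (fun n => eIntegral (μ n) (f n)) atTop := by
  classical
  -- notation
  set gE : ℕ → S → EReal := fun n s => ((g n s : ℝ) : EReal) with hgE_def
  have hghat_meas : Measurable fun s => dLimsup gE s := dLimsup_measurable gE
  set Ng := ∫⁻ s, (dLimsup gE s).negENN ∂ν with hNg_def
  have hNg : Ng ≠ ⊤ := by
    intro h
    have : eIntegral ν (fun s => dLimsup gE s) = ⊥ := by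
      show ((_ : ℝ≥0∞) : EReal) - ((Ng : ℝ≥0∞) : EReal) = ⊥
      rw [h, EReal.coe_ennreal_top, EReal.sub_top]
    rw [this] at hgbd
    exact lt_irrefl _ hgbd
  -- pointwise monotonicity of eIntegral (used in both cases)
  have hmono_fg : ∀ n, eIntegral (μ n) (gE n) ≤ eIntegral (μ n) (f n) := by
    intro n
    exact eIntegral_mono_ae (Filter.Eventually.of_forall fun s => hfg n s)
  by_cases hPg : (∫⁻ s, (dLimsup gE s).posENN ∂ν) = ⊤
  · -- the minorant has infinite integral: everything is ⊤
    have htop : eIntegral ν (fun s => dLimsup gE s) = ⊤ := by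
      show ((_ : ℝ≥0∞) : EReal) - ((Ng : ℝ≥0∞) : EReal) = ⊤
      rw [hPg, EReal.coe_ennreal_top]
      exact EReal.top_sub_of_ne_top (EReal.coe_ennreal_ne_top hNg)
    have hliminfg : liminf (fun n => eIntegral (μ n) (fun s => gE n s)) atTop = ⊤ := by
      refine top_le_iff.1 ?_
      rw [← htop]
      exact hgle
    have hliminff : liminf (fun n => eIntegral (μ n) (f n)) atTop = ⊤ := by
      refine top_le_iff.1 ?_
      rw [← hliminfg]
      exact Filter.liminf_le_liminf (Filter.Eventually.of_forall hmono_fg)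
    rw [hliminff]
    exact le_top
  · -- main case
    set H : ℕ → S → ℝ≥0∞ := fun n s => (f n s - ((g n s : ℝ) : EReal)).posENN with hH_def
    have hHmeas : ∀ n, Measurable (H n) :=
      fun n => EReal.measurable_posENN.comp (measurable_sub_coe (hf n) (hg n))
    have hsub_nonneg : ∀ n s, (0 : EReal) ≤ f n s - ((g n s : ℝ) : EReal) := by
      intro n s
      refine (EReal.le_sub_iff_add_le (Or.inl (EReal.coe_ne_bot _))
        (Or.inl (EReal.coe_ne_top _))).2 ?_
      rw [zero_add]
      exact hfg n s
    have hHval : ∀ n s, ((H n s : ℝ≥0∞) : EReal) = f n s - ((g n s : ℝ) : EReal) :=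
      fun n s => EReal.coe_posENN (hsub_nonneg n s)
    set U : S → ℝ≥0∞ := fun s => ⨆ n, psiFun H n s with hU_def
    have hUmeas : Measurable U := Measurable.iSup (psiFun_measurable H)
    -- almost everywhere the upper gauge of g is not ⊥
    have haeg : ∀ᵐ s ∂ν, (dLimsup gE s).negENN < ⊤ :=
      ae_lt_top (EReal.measurable_negENN.comp hghat_meas) hNg
    have haeg' : ∀ᵐ s ∂ν, dLimsup gE s ≠ ⊥ := by
      refine haeg.mono fun s hs hbot => ?_
      rw [hbot] at hs
      simp at hs
    -- the pointwise inequality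
    have hpt : ∀ s, dLimsup gE s ≠ ⊥ → dLiminf f s ≤ (U s : EReal) + dLimsup gE s := by
      intro s hsne
      have claim1 : ∀ n δ, 0 < δ →
          infInner f n δ s ≤ ((psiInner H n δ s : ℝ≥0∞) : EReal) + supInner gE n δ s := by
        intro n δ hδ
        set b := supInner gE n δ s with hb_def
        have hble : gE n s ≤ b := by
          rw [hb_def]
          exact le_iSup_of_le n (le_iSup_of_le le_rfl (le_iSup_of_le s
            (le_iSup_of_le (Metric.mem_ball_self hδ) le_rfl)))
        have hbne : b ≠ ⊥ := by
          intro h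
          rw [h, le_bot_iff] at hble
          exact EReal.coe_ne_bot _ hble
        rcases eq_or_ne b ⊤ with hbt | hbt
        · rw [hbt, EReal.add_top_of_ne_bot (EReal.coe_ennreal_ne_bot _)]
          exact le_top
        · have hbr : ((b.toReal : ℝ) : EReal) = b := EReal.coe_toReal hbt hbne
          rw [← hbr]
          refine (EReal.sub_le_iff_le_add (Or.inl (EReal.coe_ne_bot _))
            (Or.inl (EReal.coe_ne_top _))).1 ?_
          rw [coe_psiInner]
          refine le_iInf fun k => le_iInf fun hk => le_iInf fun s' => le_iInf fun hs' => ?_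
          have h1 : infInner f n δ s ≤ f k s' :=
            iInf_le_of_le k (iInf_le_of_le hk (iInf_le_of_le s' (iInf_le_of_le hs' le_rfl)))
          have h2 : gE k s' ≤ ((b.toReal : ℝ) : EReal) := by
            rw [hbr]
            exact le_iSup_of_le k (le_iSup_of_le hk (le_iSup_of_le s'
              (le_iSup_of_le hs' le_rfl)))
          have h3 := EReal.sub_le_sub h1 h2
          rw [← hHval k s'] at h3
          exact h3
      have claim2 : ∀ n₀ δ₀, 0 < δ₀ →
          dLiminf f s ≤ (U s : EReal) + supInner gE n₀ δ₀ s := by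
        intro n₀ δ₀ h₀
        rw [dLiminf_eq]
        refine iSup_le fun n => iSup_le fun δ => iSup_le fun hδ => ?_
        have hδ' : 0 < min δ δ₀ := lt_min hδ h₀
        have step1 : infInner f n δ s ≤ infInner f (max n n₀) (min δ δ₀) s := by
          refine le_iInf fun k => le_iInf fun hk => le_iInf fun s' => le_iInf fun hs' => ?_
          exact iInf_le_of_le k (iInf_le_of_le (le_trans (le_max_left n n₀) hk)
            (iInf_le_of_le s' (iInf_le_of_le (Metric.ball_subset_ball (min_le_left δ δ₀) hs')
              le_rfl)))
        have step2 := claim1 (max n n₀) (min δ δ₀) hδ'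
        have step3 : ((psiInner H (max n n₀) (min δ δ₀) s : ℝ≥0∞) : EReal) ≤ (U s : EReal) := by
          refine EReal.coe_ennreal_le_coe_ennreal_iff.2 ?_
          refine le_trans ?_ (le_iSup (fun n => psiFun H n s) (max n n₀))
          exact le_iSup_of_le (min δ δ₀) (le_iSup_of_le hδ' le_rfl)
        have step4 : supInner gE (max n n₀) (min δ δ₀) s ≤ supInner gE n₀ δ₀ s :=
          supInner_mono_delta gE (le_max_right n n₀) (min_le_right δ δ₀) s
        exact le_trans step1 (le_trans step2 (add_le_add step3 step4))
      rcases eq_or_ne (U s) ⊤ with hUt | hUt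
      · rw [hUt, EReal.coe_ennreal_top, EReal.top_add_of_ne_bot hsne]
        exact le_top
      · have hco : ((U s : ℝ≥0∞) : EReal) = (((U s).toReal : ℝ) : EReal) :=
          EReal.coe_ennreal_eq_coe_toReal hUt
        have hsub : dLiminf f s - ((U s).toReal : ℝ) ≤ dLimsup gE s := by
          rw [dLimsup_eq]
          refine le_iInf fun n => le_iInf fun δ => le_iInf fun hδ => ?_
          refine EReal.sub_le_of_le_add ?_
          have := claim2 n δ hδ
          rwa [hco, add_comm] at this
        have := (EReal.sub_le_iff_le_add (Or.inl (EReal.coe_ne_bot _))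
          (Or.inl (EReal.coe_ne_top _))).1 hsub
        rwa [add_comm, ← hco] at this
    -- putting the integrals together
    have hstep1 : eIntegral ν (fun s => dLiminf f s)
        ≤ eIntegral ν (fun s => (U s : EReal) + dLimsup gE s) :=
      eIntegral_mono_ae (haeg'.mono fun s hs => hpt s hs)
    have hstep2 : eIntegral ν (fun s => (U s : EReal) + dLimsup gE s)
        = ((∫⁻ s, U s ∂ν : ℝ≥0∞) : EReal) + eIntegral ν (fun s => dLimsup gE s) :=
      eIntegral_coe_add hUmeas hghat_meas hNg
    have hstep3 : ((∫⁻ s, U s ∂ν : ℝ≥0∞) : EReal)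
        ≤ liminf (fun k => eIntegral (μ k) (fun s => ((H k s : ℝ≥0∞) : EReal))) atTop := by
      have h1 : ∫⁻ s, U s ∂ν ≤ atTop.liminf fun k => ∫⁻ s, H k s ∂(μ k) := core_nonneg hw H
      calc ((∫⁻ s, U s ∂ν : ℝ≥0∞) : EReal)
          ≤ ((atTop.liminf fun k => ∫⁻ s, H k s ∂(μ k) : ℝ≥0∞) : EReal) :=
            EReal.coe_ennreal_le_coe_ennreal_iff.2 h1
        _ = liminf (fun k => ((∫⁻ s, H k s ∂(μ k) : ℝ≥0∞) : EReal)) atTop :=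
            EReal.coe_ennreal_liminf _
        _ = liminf (fun k => eIntegral (μ k) (fun s => ((H k s : ℝ≥0∞) : EReal))) atTop := by
            simp only [eIntegral_coe_ennreal]
    have hptk : ∀ k, eIntegral (μ k) (fun s => ((H k s : ℝ≥0∞) : EReal))
        + eIntegral (μ k) (fun s => gE k s) ≤ eIntegral (μ k) (f k) := by
      intro k
      by_cases hNk : (∫⁻ s, ((gE k s)).negENN ∂(μ k)) = ⊤
      · have hbot : eIntegral (μ k) (fun s => gE k s) = ⊥ := by
          show ((_ : ℝ≥0∞) : EReal) - ((_ : ℝ≥0∞) : EReal) = ⊥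
          rw [hNk, EReal.coe_ennreal_top, EReal.sub_top]
        rw [hbot, EReal.add_bot]
        exact bot_le
      · have heq := eIntegral_coe_add (μ := μ k) (hHmeas k)
          ((hg k).coe_real_ereal) hNk
        have hfeq : (fun s => ((H k s : ℝ≥0∞) : EReal) + gE k s) = f k := by
          funext s
          rw [hHval k s, EReal.sub_add_cancel]
        rw [hfeq] at heq
        rw [eIntegral_coe_ennreal]
        exact le_of_eq heq.symm
    calc eIntegral ν (fun s => dLiminf f s)
        ≤ ((∫⁻ s, U s ∂ν : ℝ≥0∞) : EReal) + eIntegral ν (fun s => dLimsup gE s) :=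
          hstep1.trans (le_of_eq hstep2)
      _ ≤ liminf (fun k => eIntegral (μ k) (fun s => ((H k s : ℝ≥0∞) : EReal))) atTop
            + eIntegral ν (fun s => dLimsup gE s) := add_le_add_left hstep3 _
      _ ≤ liminf (fun k => eIntegral (μ k) (fun s => ((H k s : ℝ≥0∞) : EReal))) atTop
            + liminf (fun k => eIntegral (μ k) (fun s => gE k s)) atTop :=
          add_le_add_right hgle _
      _ ≤ liminf (fun k => eIntegral (μ k) (fun s => ((H k s : ℝ≥0∞) : EReal))
            + eIntegral (μ k) (fun s => gE k s)) atTop := EReal.le_liminf_add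
      _ ≤ liminf (fun n => eIntegral (μ n) (f n)) atTop :=
          Filter.liminf_le_liminf (Filter.Eventually.of_forall hptk)
end

section
/- Let {f_n} be a sequence of real-valued functions on a metric space S, let s ∈ S, and suppose the sequence {f_n(s)} converges. Then the sequence {f_n} is equicontinuous at s if and only if each function f_n is continuous at s and lim_{n→∞, s'→s} f_n(s') = lim_{n→∞} f_n(s) (in particular the double limit exists). -/
open Filter Metric Topology

/-- The sequence `{f_n}` is lower semi-equicontinuous at `s`. -/
def LowerSemiEquicontinuousAt {S : Type*} [MetricSpace S] (f : ℕ → S → ℝ) (s : S) : Prop :=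
  ∀ ε : ℝ, 0 < ε → ∃ δ : ℝ, 0 < δ ∧ ∀ n : ℕ, ∀ s' ∈ Metric.ball s δ, f n s - ε < f n s'

/-- The sequence `{f_n}` is equicontinuous at `s`: it is both lower and upper
semi-equicontinuous at `s`. -/
def SeqEquicontinuousAt {S : Type*} [MetricSpace S] (f : ℕ → S → ℝ) (s : S) : Prop :=
  LowerSemiEquicontinuousAt f s ∧ LowerSemiEquicontinuousAt (fun n s' => -(f n s')) s


lemma aux_le_of_forall_sub (L : ℝ) (x : EReal)
    (h : ∀ ε : ℝ, 0 < ε → ((L - ε : ℝ) : EReal) ≤ x) : (L : EReal) ≤ x := by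
  by_contra h'
  push_neg at h'
  induction x using EReal.rec with
  | bot =>
      exact (EReal.coe_ne_bot _) (le_bot_iff.1 (h 1 one_pos))
  | coe r =>
      have hr : r < L := by exact_mod_cast h'
      have := h ((L - r)/2) (by linarith)
      rw [EReal.coe_le_coe_iff] at this
      linarith
  | top => exact (not_top_lt h').elim

lemma aux_le_of_forall_add (L : ℝ) (x : EReal)
    (h : ∀ ε : ℝ, 0 < ε → x ≤ ((L + ε : ℝ) : EReal)) : x ≤ (L : EReal) := by
  by_contra h'
  push_neg at h'
  induction x using EReal.rec with
  | bot => exact (not_lt_bot h').elim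
  | coe r =>
      have hr : L < r := by exact_mod_cast h'
      have := h ((r - L)/2) (by linarith)
      rw [EReal.coe_le_coe_iff] at this
      linarith
  | top =>
      exact (EReal.coe_ne_top _) (top_le_iff.1 (h 1 one_pos))

lemma aux_combine {S : Type*} [MetricSpace S] (f : ℕ → S → ℝ) (s : S) (M : ℕ)
    (hcont : ∀ n, ContinuousAt (f n) s) (ε : ℝ) (hε : 0 < ε)
    (δ₀ : ℝ) (hδ₀ : 0 < δ₀)
    (htail : ∀ k, M ≤ k → ∀ s' ∈ Metric.ball s δ₀, f k s - ε < f k s') :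
    ∃ δ : ℝ, 0 < δ ∧ ∀ n : ℕ, ∀ s' ∈ Metric.ball s δ, f n s - ε < f n s' := by
  have hc : ∀ k : ℕ, ∃ δk : ℝ, 0 < δk ∧ ∀ s', dist s' s < δk → |f k s' - f k s| < ε := by
    intro k
    have := Metric.continuousAt_iff.1 (hcont k) ε hε
    obtain ⟨δk, hδk, h⟩ := this
    exact ⟨δk, hδk, fun s' hs' => by
      have := h hs'
      rwa [Real.dist_eq] at this⟩
  choose δk hδk hδk' using hc
  classical
  set F : Finset ℝ := insert δ₀ ((Finset.range M).image δk) with hF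
  have hne : F.Nonempty := ⟨δ₀, Finset.mem_insert_self _ _⟩
  refine ⟨F.min' hne, ?_, ?_⟩
  · have hmem : F.min' hne ∈ insert δ₀ ((Finset.range M).image δk) := F.min'_mem hne
    rcases Finset.mem_insert.1 hmem with h | h
    · rw [h]; exact hδ₀
    · obtain ⟨k, _, hk⟩ := Finset.mem_image.1 h
      rw [← hk]; exact hδk k
  · intro n s' hs'
    rw [Metric.mem_ball] at hs'
    by_cases hn : M ≤ n
    · refine htail n hn s' ?_
      rw [Metric.mem_ball]
      exact lt_of_lt_of_le hs' (Finset.min'_le _ _ (Finset.mem_insert_self _ _))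
    · push_neg at hn
      have hle : F.min' hne ≤ δk n := by
        refine Finset.min'_le _ _ ?_
        exact Finset.mem_insert_of_mem (Finset.mem_image.2 ⟨n, Finset.mem_range.2 hn, rfl⟩)
      have := hδk' n s' (lt_of_lt_of_le hs' hle)
      have := abs_sub_lt_iff.1 this
      linarith [this.2]

/-- Corollary 3.1: if `{f_n(s)}` converges, then `{f_n}` is equicontinuous at `s` iff each
`f_n` is continuous at `s` and the double limit over `n → ∞, s' → s` exists and equals
`lim_n f_n(s)`. -/
theorem seqEquicontinuousAt_iff {S : Type*} [MetricSpace S]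
    (f : ℕ → S → ℝ) (s : S) (L : ℝ) (hL : Tendsto (fun n => f n s) atTop (𝓝 L)) :
    SeqEquicontinuousAt f s ↔
      ((∀ n, ContinuousAt (f n) s) ∧
        dLiminf (fun n s' => ((f n s' : ℝ) : EReal)) s = (L : EReal) ∧
        dLimsup (fun n s' => ((f n s' : ℝ) : EReal)) s = (L : EReal)) := by
  have hLdist : ∀ ε : ℝ, 0 < ε → ∃ N : ℕ, ∀ k, N ≤ k → |f k s - L| < ε := by
    intro ε hε
    obtain ⟨N, hN⟩ := Metric.tendsto_atTop.1 hL ε hε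
    exact ⟨N, fun k hk => by have := hN k hk; rwa [Real.dist_eq] at this⟩
  constructor
  · rintro ⟨hlo, hup⟩
    have hcont : ∀ n, ContinuousAt (f n) s := by
      intro n
      rw [Metric.continuousAt_iff]
      intro ε hε
      obtain ⟨δ₁, hδ₁, h₁⟩ := hlo (ε/2) (by linarith)
      obtain ⟨δ₂, hδ₂, h₂⟩ := hup (ε/2) (by linarith)
      refine ⟨min δ₁ δ₂, lt_min hδ₁ hδ₂, ?_⟩
      intro x hx
      have hx1 := h₁ n x (Metric.mem_ball.2 (lt_of_lt_of_le hx (min_le_left _ _)))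
      have hx2 := h₂ n x (Metric.mem_ball.2 (lt_of_lt_of_le hx (min_le_right _ _)))
      simp only at hx2
      rw [Real.dist_eq, abs_sub_lt_iff]
      constructor <;> linarith
    refine ⟨hcont, ?_, ?_⟩
    · apply le_antisymm
      · rw [dLiminf]
        refine iSup_le fun n => iSup_le fun δ => iSup_le fun hδ => ?_
        apply aux_le_of_forall_add
        intro ε hε
        obtain ⟨N, hN⟩ := hLdist ε hε
        set k := max n N with hk
        calc (⨅ (k : ℕ) (_ : n ≤ k) (s' : S) (_ : s' ∈ Metric.ball s δ),
                ((f k s' : ℝ) : EReal))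
            ≤ ((f k s : ℝ) : EReal) := by
              refine iInf_le_of_le k (iInf_le_of_le (le_max_left _ _)
                (iInf_le_of_le s (iInf_le _ (Metric.mem_ball_self hδ))))
          _ ≤ ((L + ε : ℝ) : EReal) := by
              rw [EReal.coe_le_coe_iff]
              have := hN k (le_max_right _ _)
              have := abs_sub_lt_iff.1 this
              linarith [this.1]
      · apply aux_le_of_forall_sub
        intro ε hε
        obtain ⟨δ, hδ, hδ'⟩ := hlo (ε/2) (by linarith)
        obtain ⟨N, hN⟩ := hLdist (ε/2) (by linarith)
        rw [dLiminf]
        refine le_iSup_of_le N (le_iSup_of_le δ (le_iSup_of_le hδ ?_))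
        refine le_iInf fun k => le_iInf fun hk => le_iInf fun s' => le_iInf fun hs' => ?_
        rw [EReal.coe_le_coe_iff]
        have h1 := hδ' k s' hs'
        have h2 := abs_sub_lt_iff.1 (hN k hk)
        linarith [h2.2]
    · apply le_antisymm
      · apply aux_le_of_forall_add
        intro ε hε
        obtain ⟨δ, hδ, hδ'⟩ := hup (ε/2) (by linarith)
        obtain ⟨N, hN⟩ := hLdist (ε/2) (by linarith)
        rw [dLimsup]
        refine iInf_le_of_le N (iInf_le_of_le δ (iInf_le_of_le hδ ?_))
        refine iSup_le fun k => iSup_le fun hk => iSup_le fun s' => iSup_le fun hs' => ?_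
        rw [EReal.coe_le_coe_iff]
        have h1 := hδ' k s' hs'
        simp only at h1
        have h2 := abs_sub_lt_iff.1 (hN k hk)
        linarith [h2.1]
      · rw [dLimsup]
        refine le_iInf fun n => le_iInf fun δ => le_iInf fun hδ => ?_
        apply aux_le_of_forall_sub
        intro ε hε
        obtain ⟨N, hN⟩ := hLdist ε hε
        set k := max n N with hk
        calc ((L - ε : ℝ) : EReal) ≤ ((f k s : ℝ) : EReal) := by
              rw [EReal.coe_le_coe_iff]
              have := abs_sub_lt_iff.1 (hN k (le_max_right _ _))
              linarith [this.2]
          _ ≤ ⨆ (s' : S) (_ : s' ∈ Metric.ball s δ), ((f k s' : ℝ) : EReal) :=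
              le_iSup₂ (f := fun (s' : S) (_ : s' ∈ Metric.ball s δ) =>
                ((f k s' : ℝ) : EReal)) s (Metric.mem_ball_self hδ)
          _ ≤ _ := le_iSup₂ (f := fun (k : ℕ) (_ : n ≤ k) =>
              ⨆ (s' : S) (_ : s' ∈ Metric.ball s δ), ((f k s' : ℝ) : EReal)) k (le_max_left n N)
  · rintro ⟨hcont, hlinf, hlsup⟩
    constructor
    · intro ε hε
      have h1 : ((L - ε/3 : ℝ) : EReal) < dLiminf (fun n s' => ((f n s' : ℝ) : EReal)) s := by
        rw [hlinf, EReal.coe_lt_coe_iff]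
        linarith
      rw [dLiminf, lt_iSup_iff] at h1
      obtain ⟨n₀, h1⟩ := h1
      rw [lt_iSup_iff] at h1
      obtain ⟨δ₀, h1⟩ := h1
      rw [lt_iSup_iff] at h1
      obtain ⟨hδ₀, h1⟩ := h1
      have key : ∀ k, n₀ ≤ k → ∀ s' ∈ Metric.ball s δ₀, L - ε/3 < f k s' := by
        intro k hk s' hs'
        have := lt_of_lt_of_le h1 (iInf_le_of_le k (iInf_le_of_le hk
          (iInf_le_of_le s' (iInf_le _ hs'))))
        exact_mod_cast this
      obtain ⟨N, hN⟩ := hLdist (ε/3) (by linarith)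
      refine aux_combine f s (max n₀ N) hcont ε hε δ₀ hδ₀ ?_
      intro k hk s' hs'
      have h2 := key k (le_trans (le_max_left _ _) hk) s' hs'
      have h3 := abs_sub_lt_iff.1 (hN k (le_trans (le_max_right _ _) hk))
      linarith [h3.1]
    · intro ε hε
      have h1 : dLimsup (fun n s' => ((f n s' : ℝ) : EReal)) s < ((L + ε/3 : ℝ) : EReal) := by
        rw [hlsup, EReal.coe_lt_coe_iff]
        linarith
      rw [dLimsup, iInf_lt_iff] at h1
      obtain ⟨n₀, h1⟩ := h1
      rw [iInf_lt_iff] at h1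
      obtain ⟨δ₀, h1⟩ := h1
      rw [iInf_lt_iff] at h1
      obtain ⟨hδ₀, h1⟩ := h1
      have key : ∀ k, n₀ ≤ k → ∀ s' ∈ Metric.ball s δ₀, f k s' < L + ε/3 := by
        intro k hk s' hs'
        have := lt_of_le_of_lt (le_iSup_of_le k (le_iSup_of_le hk
          (le_iSup_of_le s' (le_iSup_of_le hs' le_rfl)))) h1
        exact_mod_cast this
      obtain ⟨N, hN⟩ := hLdist (ε/3) (by linarith)
      have hcont' : ∀ n, ContinuousAt (fun s' => -(f n s')) s := fun n => (hcont n).neg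
      refine aux_combine (fun n s' => -(f n s')) s (max n₀ N) hcont' ε hε δ₀ hδ₀ ?_
      intro k hk s' hs'
      have h2 := key k (le_trans (le_max_left _ _) hk) s' hs'
      have h3 := abs_sub_lt_iff.1 (hN k (le_trans (le_max_right _ _) hk))
      linarith [h3.2]
end

section
/- Let S be a metric space and {f_n} a sequence of real-valued lower semi-continuous functions on S that semi-converges uniformly from below to a real-valued lower semi-continuous function f on S. If {f_n} converges pointwise to f on S, then {f_n} is lower semi-equicontinuous at every point of S. -/
open Filter Metric Topology

/-- `{f_n}` semi-converges uniformly from below to `f`: for each `ε > 0` there is `N` with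
`f_n(s) > f(s) − ε` for all `s` and all `n ≥ N`. -/
def SemiConvUniformlyBelow {S : Type*} (f : ℕ → S → ℝ) (g : S → ℝ) : Prop :=
  ∀ ε : ℝ, 0 < ε → ∃ N : ℕ, ∀ n : ℕ, N ≤ n → ∀ s : S, g s - ε < f n s

/-- Corollary 3.2: a sequence of lower semi-continuous functions that semi-converges uniformly
from below and pointwise to a lower semi-continuous function is lower semi-equicontinuous. -/
theorem lowerSemiEquicontinuous_of_semiConvUniformlyBelow {S : Type*} [MetricSpace S]
    (f : ℕ → S → ℝ) (g : S → ℝ)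
    (hlsc : ∀ n, LowerSemicontinuous (f n)) (hglsc : LowerSemicontinuous g)
    (hunif : SemiConvUniformlyBelow f g)
    (hptw : ∀ s, Tendsto (fun n => f n s) atTop (𝓝 (g s))) :
    ∀ s : S, LowerSemiEquicontinuousAt f s := by
  intro s ε hε
  have hε3 : 0 < ε / 3 := by linarith
  obtain ⟨N, hN⟩ := hunif (ε / 3) hε3
  obtain ⟨N', hN'⟩ := (Metric.tendsto_atTop.mp (hptw s)) (ε / 3) hε3
  set M := max N N' with hM
  -- δ₀ from lower semicontinuity of g at s
  have hg := hglsc s (g s - ε / 3) (by linarith)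
  rw [Metric.eventually_nhds_iff_ball] at hg
  obtain ⟨δ₀, hδ₀, hg0⟩ := hg
  -- δ_n from lower semicontinuity of each f n at s
  have hchoice : ∀ n : ℕ, ∃ δ : ℝ, 0 < δ ∧ ∀ s' ∈ Metric.ball s δ, f n s - ε < f n s' := by
    intro n
    have h := hlsc n s (f n s - ε) (by linarith)
    rw [Metric.eventually_nhds_iff_ball] at h
    obtain ⟨δ, hδ, h⟩ := h
    exact ⟨δ, hδ, h⟩
  choose d hd hdp using hchoice
  set δ : ℝ := min δ₀ ((Finset.range (M + 1)).inf' ⟨0, by simp⟩ d) with hδdef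
  refine ⟨δ, ?_, ?_⟩
  · apply lt_min hδ₀
    refine (Finset.lt_inf'_iff _).2 ?_
    intro i _
    exact hd i
  · intro n s' hs'
    rcases le_or_gt M n with hn | hn
    · -- large n: use uniform semi-convergence and pointwise convergence
      have h1 : g s' - ε / 3 < f n s' := hN n (le_trans (le_max_left _ _) hn) s'
      have h2 : g s - ε / 3 < g s' := by
        apply hg0
        exact Metric.ball_subset_ball (min_le_left _ _) hs'
      have h3 : |f n s - g s| < ε / 3 := hN' n (le_trans (le_max_right _ _) hn)
      have h4 : f n s - g s < ε / 3 := (abs_lt.mp h3).2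
      linarith
    · -- small n: use lower semicontinuity of f n
      apply hdp n
      apply Metric.ball_subset_ball _ hs'
      exact le_trans (min_le_right _ _)
        (Finset.inf'_le d (Finset.mem_range.mpr (by omega)))
end

section
/- Let (S, Σ) be a measurable space, {μ_n} a sequence of measures converging setwise to a finite measure μ, and {f_n} a sequence of measurable extended-real-valued functions on S. If {f_n} lower semi-converges to a measurable real-valued function f in measure μ and the sequence of negative parts {f_n^-} is asymptotically uniformly integrable with respect to {μ_n}, then ∫_S f(s) μ(ds) ≤ liminf_{n→∞} ∫_S f_n(s) μ_n(ds), provided all integrals appearing are defined. -/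
open MeasureTheory Filter Metric Topology
open scoped ENNReal

/-- `{μ_n}` converges setwise to `μ`: `μ_n(C) → μ(C)` for every measurable set `C`. -/
def SetwiseConv {S : Type*} [MeasurableSpace S] (μ : ℕ → Measure S) (ν : Measure S) : Prop :=
  ∀ C : Set S, MeasurableSet C → Tendsto (fun n => μ n C) atTop (𝓝 (ν C))

/-- `{f_n}` lower semi-converges to `f` in measure `μ`:
`μ({s : f_n(s) ≤ f(s) − ε}) → 0` for every `ε > 0`. -/
def LowerSemiConvInMeasureE {S : Type*} [MeasurableSpace S]
    (f : ℕ → S → EReal) (g : S → ℝ) (μ : Measure S) : Prop :=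
  ∀ ε : ℝ, 0 < ε → Tendsto (fun n => μ {s | f n s ≤ ((g s : ℝ) : EReal) - (ε : EReal)})
    atTop (𝓝 0)

open scoped NNReal

namespace FCS


lemma abs_coe_nonneg (r : ℝ) (hr : 0 ≤ r) : (r : EReal).abs = ENNReal.ofReal r := by
  rw [EReal.abs_def, abs_of_nonneg hr]

lemma max_coe (r q : ℝ) : max (r : EReal) (q : EReal) = ((max r q : ℝ) : EReal) := by
  rcases le_total r q with h | h
  · rw [max_eq_right (EReal.coe_le_coe_iff.mpr h), max_eq_right h]
  · rw [max_eq_left (EReal.coe_le_coe_iff.mpr h), max_eq_left h]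

lemma posENN_coe (r : ℝ) : EReal.posENN (r : EReal) = ENNReal.ofReal r := by
  unfold EReal.posENN
  rw [show ((0:EReal)) = ((0:ℝ):EReal) by norm_num, max_coe, EReal.abs_def,
    abs_of_nonneg (le_max_right r 0)]
  rcases le_total r 0 with h | h
  · rw [max_eq_right h, ENNReal.ofReal_zero, ENNReal.ofReal_eq_zero.mpr h]
  · rw [max_eq_left h]

lemma negENN_coe (r : ℝ) : EReal.negENN (r : EReal) = ENNReal.ofReal (-r) := by
  unfold EReal.negENN
  rw [← EReal.coe_neg]
  exact posENN_coe (-r)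

@[simp] lemma posENN_bot : EReal.posENN ⊥ = 0 := by
  unfold EReal.posENN
  rw [max_eq_right bot_le]
  exact EReal.abs_zero

@[simp] lemma posENN_top : EReal.posENN ⊤ = ⊤ := by
  unfold EReal.posENN
  rw [max_eq_left le_top]
  exact EReal.abs_top

@[simp] lemma negENN_bot : EReal.negENN ⊥ = ⊤ := by
  unfold EReal.negENN
  rw [show -(⊥:EReal) = ⊤ from rfl]
  rw [max_eq_left le_top]
  exact EReal.abs_top

@[simp] lemma negENN_top : EReal.negENN ⊤ = 0 := by
  unfold EReal.negENN
  rw [show -(⊤:EReal) = ⊥ from rfl]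
  rw [max_eq_right bot_le]
  exact EReal.abs_zero

lemma abs_le_abs_nonneg {x y : EReal} (hx : 0 ≤ x) (h : x ≤ y) : x.abs ≤ y.abs := by
  induction y using EReal.rec with
  | bot => exact absurd (hx.trans h) (by simp)
  | top => simp
  | coe q =>
    induction x using EReal.rec with
    | bot => exact absurd hx (by simp)
    | top => exact absurd h (by simp)
    | coe r =>
      rw [EReal.abs_def, EReal.abs_def]
      have hr : (0:ℝ) ≤ r := by exact_mod_cast hx
      have hq : r ≤ q := by exact_mod_cast h
      rw [abs_of_nonneg hr, abs_of_nonneg (hr.trans hq)]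
      exact ENNReal.ofReal_le_ofReal hq

lemma posENN_mono : Monotone EReal.posENN := by
  intro x y h
  exact abs_le_abs_nonneg (le_max_right x 0) (max_le_max h le_rfl)

lemma negENN_anti : Antitone EReal.negENN := by
  intro x y h
  exact abs_le_abs_nonneg (le_max_right _ 0) (max_le_max (EReal.neg_le_neg_iff.mpr h) le_rfl)


-- (p1 content assumed; here just axiomatize to test p2 separately)

/-- coercion of finite ENNReal to EReal is the real coercion of toReal -/
lemma coe_ennreal_eq {c : ℝ≥0∞} (h : c ≠ ⊤) : (c : EReal) = ((c.toReal : ℝ) : EReal) := by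
  rw [← ENNReal.ofReal_toReal h, EReal.coe_ennreal_ofReal,
    max_eq_left ENNReal.toReal_nonneg, ENNReal.toReal_ofReal ENNReal.toReal_nonneg]

lemma coe_ennreal_ofReal_nonneg {K : ℝ} (hK : 0 ≤ K) :
    ((ENNReal.ofReal K : ℝ≥0∞) : EReal) = (K : EReal) := by
  rw [EReal.coe_ennreal_ofReal, max_eq_left hK]

/-- key pointwise identity -/
lemma key_pointwise (K : ℝ) (hK : 0 ≤ K) (x : EReal) :
    EReal.posENN (x + (K : EReal)) + EReal.negENN (max x (-(K : EReal)))
      = EReal.posENN x + ENNReal.ofReal K := by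
  induction x using EReal.rec with
  | bot =>
    rw [EReal.bot_add, posENN_bot, max_eq_right bot_le, ← EReal.coe_neg,
      negENN_coe, neg_neg]
  | top =>
    rw [EReal.top_add_coe, posENN_top]
    simp
  | coe r =>
    rw [← EReal.coe_add, posENN_coe, posENN_coe, ← EReal.coe_neg, max_coe, negENN_coe]
    rcases le_total 0 r with h0 | h0
    · have : max r (-K) = r := max_eq_left (by linarith)
      rw [this, ENNReal.ofReal_add h0 hK]
      simp [ENNReal.ofReal_eq_zero.mpr (by linarith : -r ≤ 0)]
    · rcases le_total (-K) r with h1 | h1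
      · have hm : max r (-K) = r := max_eq_left h1
        rw [hm, ENNReal.ofReal_eq_zero.mpr h0, ← ENNReal.ofReal_add (by linarith) (by linarith)]
        norm_num
      · have hm : max r (-K) = -K := max_eq_right h1
        rw [hm, neg_neg]
        rw [ENNReal.ofReal_eq_zero.mpr (by linarith : r + K ≤ 0)]
        rw [ENNReal.ofReal_eq_zero.mpr h0]

/-- negative part bound after truncation -/
lemma trunc_neg_le (K : ℝ) (hK : 0 ≤ K) (x : EReal) :
    EReal.negENN (max x (-(K : EReal))) ≤ ENNReal.ofReal K := by
  have h1 : max (-(max x (-(K:EReal)))) 0 ≤ ((K:ℝ) : EReal) := by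
    apply max_le _ (EReal.coe_le_coe_iff.mpr hK)
    rw [show (-(K:ℝ) : EReal) = ((-K : ℝ) : EReal) by rw [EReal.coe_neg]] at *
    calc -(max x ((-K:ℝ):EReal)) ≤ -((-K:ℝ):EReal) := EReal.neg_le_neg_iff.mpr (le_max_right _ _)
    _ = ((K:ℝ):EReal) := by rw [← EReal.coe_neg, neg_neg]
  calc EReal.negENN (max x (-(K : EReal))) ≤ ((K:ℝ):EReal).abs :=
        abs_le_abs_nonneg (le_max_right _ 0) h1
  _ = ENNReal.ofReal K := by rw [EReal.abs_def, abs_of_nonneg hK]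

/-- tail bound pointwise -/
lemma neg_le_trunc_add_tail (K : ℝ) (x : EReal) :
    EReal.negENN x ≤ EReal.negENN (max x (-(K : EReal)))
      + (if (K : EReal) ≤ (EReal.negENN x : EReal) then EReal.negENN x else 0) := by
  split_ifs with h
  · exact le_add_self
  · push_neg at h
    induction x using EReal.rec with
    | bot =>
      rw [negENN_bot, EReal.coe_ennreal_top] at h
      exact absurd h (by simp)
    | top =>
      rw [negENN_top, max_eq_left (le_top : -(K:EReal) ≤ ⊤), negENN_top]
      simp
    | coe r =>
      rw [negENN_coe, EReal.coe_ennreal_ofReal] at h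
      have hrK : -K < r := by
        have := EReal.coe_lt_coe_iff.mp h
        rcases le_total (-r) 0 with h2 | h2
        · rw [max_eq_right h2] at this; linarith
        · rw [max_eq_left h2] at this; linarith
      rw [max_eq_left (by
        rw [show -((K:ℝ):EReal) = ((-K:ℝ):EReal) by rw [EReal.coe_neg]]
        exact EReal.coe_le_coe_iff.mpr hrK.le)]
      simp

lemma g_pointwise (K : ℝ) (hK : 0 ≤ K) (r : ℝ) :
    ENNReal.ofReal r + ENNReal.ofReal K ≤ ENNReal.ofReal (r + K) + ENNReal.ofReal (-r) := by
  rcases le_total 0 r with h0 | h0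
  · rw [ENNReal.ofReal_add h0 hK]; exact le_add_right le_rfl
  · rcases le_total (-K) r with h1 | h1
    · rw [ENNReal.ofReal_eq_zero.mpr h0, zero_add,
        ← ENNReal.ofReal_add (by linarith) (by linarith)]
      exact ENNReal.ofReal_le_ofReal (by linarith)
    · rw [ENNReal.ofReal_eq_zero.mpr h0, zero_add, ENNReal.ofReal_eq_zero.mpr (by linarith : r + K ≤ 0), zero_add]
      exact ENNReal.ofReal_le_ofReal (by linarith)

/-- EReal arithmetic helper 1 -/
lemma helper1 {A b c d : ℝ≥0∞} (hd : d ≠ ⊤) (hbc : c ≠ ⊤ ∨ b ≠ ⊤)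
    (h : c + d ≤ A + b) : (c : EReal) - (b : EReal) ≤ (A : EReal) - (d : EReal) := by
  by_cases hb : b = ⊤
  · subst hb
    rw [EReal.coe_ennreal_top]
    have : (c : EReal) - ⊤ = ⊥ := by
      rw [sub_eq_add_neg]
      simp
    rw [this]; exact bot_le
  · by_cases hA : A = ⊤
    · subst hA
      rw [EReal.coe_ennreal_top]
      have : (⊤ : EReal) - (d : EReal) = ⊤ := by
        rw [sub_eq_add_neg, EReal.top_add_of_ne_bot]
        simp [coe_ennreal_eq hd]
      rw [this]; exact le_top
    · have hc : c ≠ ⊤ := by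
        intro hc; subst hc
        exact (by simp [hA, hb, ENNReal.add_ne_top] : A + b ≠ ⊤) (top_le_iff.mp ((le_add_right le_rfl).trans h))
      rw [coe_ennreal_eq hb, coe_ennreal_eq hA, coe_ennreal_eq hd, coe_ennreal_eq hc,
        ← EReal.coe_sub, ← EReal.coe_sub, EReal.coe_le_coe_iff]
      have := ENNReal.toReal_mono (by simp [hA, hb] : A + b ≠ ⊤) h
      rw [ENNReal.toReal_add hc hd, ENNReal.toReal_add hA hb] at this
      linarith


/-- integral of a simple function converges under setwise convergence -/
lemma simpleFunc_tendsto {S : Type*} [MeasurableSpace S] {μ : ℕ → Measure S} {ν : Measure S}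
    (hsw : SetwiseConv μ ν) (φ : SimpleFunc S ℝ≥0) :
    Tendsto (fun n => (φ.map (↑· : ℝ≥0 → ℝ≥0∞)).lintegral (μ n)) atTop
      (𝓝 ((φ.map (↑· : ℝ≥0 → ℝ≥0∞)).lintegral ν)) := by
  simp only [SimpleFunc.lintegral]
  apply tendsto_finset_sum
  intro x hx
  apply ENNReal.Tendsto.const_mul
  · exact hsw _ (SimpleFunc.measurableSet_fiber _ _)
  · right
    rcases (SimpleFunc.mem_range.mp hx) with ⟨s, hs⟩
    simp only [SimpleFunc.coe_map, Function.comp] at hs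
    exact hs ▸ ENNReal.coe_ne_top

/-- lower semicontinuity of lintegral under setwise convergence -/
lemma lintegral_le_liminf_setwise {S : Type*} [MeasurableSpace S] {μ : ℕ → Measure S}
    {ν : Measure S} (hsw : SetwiseConv μ ν) (w : S → ℝ≥0∞) :
    ∫⁻ s, w s ∂ν ≤ liminf (fun n => ∫⁻ s, w s ∂(μ n)) atTop := by
  rw [lintegral_eq_nnreal]
  apply iSup₂_le
  intro φ hφ
  have h1 : Tendsto (fun n => (φ.map (↑· : ℝ≥0 → ℝ≥0∞)).lintegral (μ n)) atTop
      (𝓝 ((φ.map (↑· : ℝ≥0 → ℝ≥0∞)).lintegral ν)) := simpleFunc_tendsto hsw φ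
  rw [← h1.liminf_eq]
  apply liminf_le_liminf ?_ ?_ ?_
  · apply Eventually.of_forall
    intro n
    rw [← SimpleFunc.lintegral_eq_lintegral]
    exact lintegral_mono (fun s => by simpa using hφ s)
  · isBoundedDefault
  · isBoundedDefault

/-- Fatou for setwise convergence with varying functions -/
lemma fatou_setwise {S : Type*} [MeasurableSpace S] {μ : ℕ → Measure S}
    {ν : Measure S} (hsw : SetwiseConv μ ν) (w : ℕ → S → ℝ≥0∞) (hw : ∀ n, Measurable (w n)) :
    ∫⁻ s, liminf (fun n => w n s) atTop ∂ν ≤ liminf (fun n => ∫⁻ s, w n s ∂(μ n)) atTop := by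
  have key : ∀ s, liminf (fun n => w n s) atTop = ⨆ m, ⨅ i, ⨅ (_ : i ≥ m), w i s :=
    fun s => liminf_eq_iSup_iInf_of_nat
  calc ∫⁻ s, liminf (fun n => w n s) atTop ∂ν
      = ∫⁻ s, ⨆ m, ⨅ i, ⨅ (_ : i ≥ m), w i s ∂ν := by
        apply lintegral_congr; intro s; exact key s
    _ = ⨆ m, ∫⁻ s, ⨅ i, ⨅ (_ : i ≥ m), w i s ∂ν := by
        apply lintegral_iSup
        · intro m
          apply Measurable.iInf
          intro i
          exact Measurable.iInf (fun _ => hw i)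
        · intro a b hab s
          exact biInf_mono (fun i hi => hab.trans hi)
    _ ≤ liminf (fun n => ∫⁻ s, w n s ∂(μ n)) atTop := by
        apply iSup_le
        intro m
        calc ∫⁻ s, ⨅ i, ⨅ (_ : i ≥ m), w i s ∂ν
            ≤ liminf (fun n => ∫⁻ s, ⨅ i, ⨅ (_ : i ≥ m), w i s ∂(μ n)) atTop :=
              lintegral_le_liminf_setwise hsw _
          _ ≤ liminf (fun n => ∫⁻ s, w n s ∂(μ n)) atTop := by
              apply liminf_le_liminf ?_ ?_ ?_
              · filter_upwards [eventually_ge_atTop m] with n hn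
                exact lintegral_mono (fun s => biInf_le (fun i => w i s) hn)
              · isBoundedDefault
              · isBoundedDefault


lemma helper2 {A U b c d e : ℝ≥0∞} (hb : b ≠ ⊤) (hd : d ≠ ⊤) (he : e ≠ ⊤)
    (hAc : A ≠ ⊤ ∨ c ≠ ⊤) (hcb : c ≤ b + e) (heq : A + d = U + b) :
    (U : EReal) - (d : EReal) - (e : EReal) ≤ (A : EReal) - (c : EReal) := by
  have hc : c ≠ ⊤ := ne_top_of_le_ne_top (ENNReal.add_ne_top.mpr ⟨hb, he⟩) hcb
  by_cases hA : A = ⊤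
  · subst hA
    rw [EReal.coe_ennreal_top]
    have : (⊤ : EReal) - (c : EReal) = ⊤ := by
      rw [sub_eq_add_neg, EReal.top_add_of_ne_bot]
      simp [coe_ennreal_eq hc]
    rw [this]; exact le_top
  · have hU : U ≠ ⊤ := by
      intro hU
      have h3 : A + d = ⊤ := by rw [heq, hU]; simp
      exact (ENNReal.add_ne_top.mpr ⟨hA, hd⟩) h3
    have h1 : A.toReal + d.toReal = U.toReal + b.toReal := by
      rw [← ENNReal.toReal_add hA hd, ← ENNReal.toReal_add hU hb, heq]
    have h2 : c.toReal ≤ b.toReal + e.toReal := by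
      rw [← ENNReal.toReal_add hb he]
      exact ENNReal.toReal_mono (ENNReal.add_ne_top.mpr ⟨hb, he⟩) hcb
    rw [coe_ennreal_eq hU, coe_ennreal_eq hd, coe_ennreal_eq he, coe_ennreal_eq hA,
      coe_ennreal_eq hc, ← EReal.coe_sub, ← EReal.coe_sub, ← EReal.coe_sub,
      EReal.coe_le_coe_iff]
    linarith

lemma lemX {S : Type*} [MeasurableSpace S] (μ : Measure S) (f : S → EReal) (hf : Measurable f)
    (K : ℝ) (hK : 0 < K) (hμ : μ Set.univ ≠ ⊤)
    (hd : IntegralDefined μ f)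
    (ht : tailIntegral μ (fun s => max (-(f s)) 0) K ≠ ⊤) :
    ((∫⁻ s, EReal.posENN (f s + (K : EReal)) ∂μ : ℝ≥0∞) : EReal)
      - ((ENNReal.ofReal K * μ Set.univ : ℝ≥0∞) : EReal)
      - ((tailIntegral μ (fun s => max (-(f s)) 0) K : ℝ≥0∞) : EReal) ≤ eIntegral μ f := by
  have hKnn := hK.le
  have hanti : Antitone (fun x : EReal => EReal.negENN (max x (-(K : EReal)))) :=
    fun a b hab => negENN_anti (max_le_max hab le_rfl)
  have hmax : Measurable fun s => EReal.negENN (max (f s) (-(K : EReal))) :=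
    hanti.measurable.comp hf
  have hnegf : Measurable fun s => EReal.negENN (f s) := (negENN_anti.measurable).comp hf
  have heq : (∫⁻ s, EReal.posENN (f s + (K : EReal)) ∂μ)
      + (∫⁻ s, EReal.negENN (max (f s) (-(K : EReal))) ∂μ)
      = (∫⁻ s, EReal.posENN (f s) ∂μ) + ENNReal.ofReal K * μ Set.univ := by
    rw [← lintegral_add_right _ hmax, ← lintegral_const (ENNReal.ofReal K),
      ← lintegral_add_right _ measurable_const]
    exact lintegral_congr (fun s => key_pointwise K hKnn (f s))
  have hNh_le : (∫⁻ s, EReal.negENN (max (f s) (-(K : EReal))) ∂μ)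
      ≤ ENNReal.ofReal K * μ Set.univ := by
    calc (∫⁻ s, EReal.negENN (max (f s) (-(K : EReal))) ∂μ)
        ≤ ∫⁻ _, ENNReal.ofReal K ∂μ := lintegral_mono (fun s => trunc_neg_le K hKnn (f s))
      _ = _ := lintegral_const _
  have hDT : ENNReal.ofReal K * μ Set.univ ≠ ⊤ := ENNReal.mul_ne_top ENNReal.ofReal_ne_top hμ
  have hNh : (∫⁻ s, EReal.negENN (max (f s) (-(K : EReal))) ∂μ) ≠ ⊤ :=
    ne_top_of_le_ne_top hDT hNh_le
  have hsetm : MeasurableSet {s | (K : EReal) ≤ ((EReal.negENN (f s) : ℝ≥0∞) : EReal)} := by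
    have hseteq : {s | (K : EReal) ≤ ((EReal.negENN (f s) : ℝ≥0∞) : EReal)}
        = (fun s => EReal.negENN (f s)) ⁻¹' (Set.Ici (ENNReal.ofReal K)) := by
      ext s
      simp only [Set.mem_setOf_eq, Set.mem_preimage, Set.mem_Ici,
        ← coe_ennreal_ofReal_nonneg hKnn, EReal.coe_ennreal_le_coe_ennreal_iff]
    rw [hseteq]
    exact hnegf measurableSet_Ici
  have hT_eq : tailIntegral μ (fun s => max (-(f s)) 0) K
      = ∫⁻ s, Set.indicator {s | (K : EReal) ≤ ((EReal.negENN (f s) : ℝ≥0∞) : EReal)}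
          (fun s => EReal.negENN (f s)) s ∂μ := by
    rw [lintegral_indicator hsetm]
    rfl
  have hNle : (∫⁻ s, EReal.negENN (f s) ∂μ)
      ≤ (∫⁻ s, EReal.negENN (max (f s) (-(K : EReal))) ∂μ)
        + tailIntegral μ (fun s => max (-(f s)) 0) K := by
    rw [hT_eq, ← lintegral_add_left hmax]
    apply lintegral_mono
    intro s
    have h := neg_le_trunc_add_tail K (f s)
    simp only [Set.indicator_apply, Set.mem_setOf_eq]
    convert h using 3
  exact helper2 hNh hDT ht hd hNle heq.symm

lemma lemY {S : Type*} [MeasurableSpace S] (ν : Measure S) [IsFiniteMeasure ν]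
    (g : S → ℝ) (hg : Measurable g) (K : ℝ) (hK : 0 ≤ K)
    (hdef' : IntegralDefined ν (fun s => ((g s : ℝ) : EReal))) :
    eIntegral ν (fun s => ((g s : ℝ) : EReal))
      ≤ ((∫⁻ s, ENNReal.ofReal (g s + K) ∂ν : ℝ≥0∞) : EReal)
        - ((ENNReal.ofReal K * ν Set.univ : ℝ≥0∞) : EReal) := by
  have hP : (∫⁻ s, EReal.posENN ((g s : ℝ) : EReal) ∂ν) = ∫⁻ s, ENNReal.ofReal (g s) ∂ν :=
    lintegral_congr (fun s => posENN_coe (g s))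
  have hN : (∫⁻ s, EReal.negENN ((g s : ℝ) : EReal) ∂ν) = ∫⁻ s, ENNReal.ofReal (-(g s)) ∂ν :=
    lintegral_congr (fun s => negENN_coe (g s))
  have hmain : (∫⁻ s, ENNReal.ofReal (g s) ∂ν) + ENNReal.ofReal K * ν Set.univ
      ≤ (∫⁻ s, ENNReal.ofReal (g s + K) ∂ν) + ∫⁻ s, ENNReal.ofReal (-(g s)) ∂ν := by
    rw [← lintegral_const (ENNReal.ofReal K), ← lintegral_add_right _ measurable_const,
      ← lintegral_add_left ((hg.add_const K).ennreal_ofReal)]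
    exact lintegral_mono (fun s => g_pointwise K hK (g s))
  have hd : ENNReal.ofReal K * ν Set.univ ≠ ⊤ :=
    ENNReal.mul_ne_top ENNReal.ofReal_ne_top (measure_ne_top ν _)
  have hbc : (∫⁻ s, ENNReal.ofReal (g s) ∂ν) ≠ ⊤ ∨ (∫⁻ s, ENNReal.ofReal (-(g s)) ∂ν) ≠ ⊤ := by
    rcases hdef' with h | h
    · left; rwa [hP] at h
    · right; rwa [hN] at h
  have := helper1 hd hbc hmain
  unfold eIntegral
  rw [hP, hN]
  exact this

lemma liminf_pointwise {u : ℕ → EReal} {a : ℝ}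
    (h : ∀ ε : ℝ, 0 < ε → ∀ᶠ k in atTop, ¬(u k ≤ (a : EReal) - (ε : EReal))) (K : ℝ) :
    ENNReal.ofReal (a + K) ≤ liminf (fun k => EReal.posENN (u k + (K : EReal))) atTop := by
  have step : ∀ ε : ℝ, 0 < ε →
      ENNReal.ofReal (a - ε + K) ≤ liminf (fun k => EReal.posENN (u k + (K : EReal))) atTop := by
    intro ε hε
    refine le_liminf_of_le ?_ ?_
    · isBoundedDefault
    filter_upwards [h ε hε] with k hk
    have h1 : ((a - ε : ℝ) : EReal) ≤ u k := by
      rw [EReal.coe_sub]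
      exact (not_le.mp hk).le
    calc ENNReal.ofReal (a - ε + K) = EReal.posENN (((a - ε + K : ℝ)) : EReal) :=
          (posENN_coe _).symm
      _ ≤ EReal.posENN (u k + (K : EReal)) := by
          apply posENN_mono
          rw [EReal.coe_add]
          exact add_le_add_left h1 _
  have htend : Tendsto (fun m : ℕ => ENNReal.ofReal (a + K - 1 / (m + 1))) atTop
      (𝓝 (ENNReal.ofReal (a + K))) := by
    apply (ENNReal.continuous_ofReal.tendsto _).comp
    have h4 : Tendsto (fun m : ℕ => (1 : ℝ) / (m + 1)) atTop (𝓝 0) :=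
      tendsto_one_div_add_atTop_nhds_zero_nat
    have h5 := Tendsto.sub
      (tendsto_const_nhds : Tendsto (fun _ : ℕ => a + K) atTop (𝓝 (a + K))) h4
    simpa using h5
  apply le_of_tendsto' htend
  intro m
  have h2 := step (1 / (m + 1)) (by positivity)
  convert h2 using 2
  exacts [rfl, by ring]

lemma EReal_lt_sub {x d : ℝ≥0∞} (hd : d ≠ ⊤) {c : ℝ}
    (h : (c : EReal) < (x : EReal) - (d : EReal)) :
    ((c + d.toReal : ℝ) : EReal) < (x : EReal) := by
  by_cases hx : x = ⊤
  · subst hx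
    rw [EReal.coe_ennreal_top]
    exact EReal.coe_lt_top _
  · rw [coe_ennreal_eq hx, coe_ennreal_eq hd, ← EReal.coe_sub, EReal.coe_lt_coe_iff] at h
    rw [coe_ennreal_eq hx, EReal.coe_lt_coe_iff]
    linarith

lemma final_lt {U d t : ℝ≥0∞} {c : ℝ} (hd : d ≠ ⊤) (ht : t ≠ ⊤)
    (h : ∀ _ : U ≠ ⊤, c < U.toReal - d.toReal - t.toReal) :
    (c : EReal) < (U : EReal) - (d : EReal) - (t : EReal) := by
  by_cases hU : U = ⊤
  · subst hU
    rw [EReal.coe_ennreal_top]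
    have h1 : (⊤ : EReal) - (d : EReal) = ⊤ := by
      rw [sub_eq_add_neg, EReal.top_add_of_ne_bot]
      simp [coe_ennreal_eq hd]
    rw [h1]
    have h2 : (⊤ : EReal) - (t : EReal) = ⊤ := by
      rw [sub_eq_add_neg, EReal.top_add_of_ne_bot]
      simp [coe_ennreal_eq ht]
    rw [h2]
    exact EReal.coe_lt_top _
  · rw [coe_ennreal_eq hU, coe_ennreal_eq hd, coe_ennreal_eq ht, ← EReal.coe_sub,
      ← EReal.coe_sub, EReal.coe_lt_coe_iff]
    exact h hU

end FCS

/-- Fatou's lemma in its classic form for setwise converging measures (Theorem 4.2). -/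
theorem fatou_classic_setwise {S : Type*} [MeasurableSpace S]
    (μ : ℕ → Measure S) (ν : Measure S) [IsFiniteMeasure ν] (hsw : SetwiseConv μ ν)
    (f : ℕ → S → EReal) (hf : ∀ n, Measurable (f n))
    (g : S → ℝ) (hg : Measurable g)
    (hconv : LowerSemiConvInMeasureE f g ν)
    (haui : AUI μ (fun n s => max (-(f n s)) 0))
    (hdef : ∀ n, IntegralDefined (μ n) (f n))
    (hdef' : IntegralDefined ν (fun s => ((g s : ℝ) : EReal))) :
    eIntegral ν (fun s => ((g s : ℝ) : EReal))
      ≤ liminf (fun n => eIntegral (μ n) (f n)) atTop := by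
  by_contra hcon
  push_neg at hcon
  obtain ⟨c, hc1, hc2⟩ := EReal.exists_between_coe_real hcon
  obtain ⟨c', hcc', hc'I⟩ := EReal.exists_between_coe_real hc2
  have hcc'R : c < c' := EReal.coe_lt_coe_iff.mp hcc'
  set θ := c' - c with hθdef
  have hθ : 0 < θ := by simp only [hθdef]; linarith
  have hfreq : ∃ᶠ n in atTop, eIntegral (μ n) (f n) < (c : EReal) :=
    frequently_lt_of_liminf_lt (by isBoundedDefault) hc1
  obtain ⟨φ, hφmono, hφlt⟩ := Filter.extraction_of_frequently_atTop hfreq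
  have hPev : ∀ k : ℕ, ∀ᶠ n in atTop,
      ν {s | f (φ n) s ≤ ((g s : ℝ) : EReal) - ((1 / ((k : ℝ) + 1) : ℝ) : EReal)}
        < (2 : ℝ≥0∞)⁻¹ ^ k := by
    intro k
    have h0 := (hconv (1 / ((k : ℝ) + 1)) (by positivity)).comp hφmono.tendsto_atTop
    exact h0.eventually_lt_const
      (ENNReal.pow_pos (ENNReal.inv_pos.mpr ENNReal.ofNat_ne_top) k)
  obtain ⟨ψ, hψmono, hψ⟩ := Filter.extraction_forall_of_eventually hPev
  set σ : ℕ → ℕ := φ ∘ ψ with hσdef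
  have hσmono : StrictMono σ := hφmono.comp hψmono
  set C : ℕ → Set S := fun k =>
    {s | f (σ k) s ≤ ((g s : ℝ) : EReal) - ((1 / ((k : ℝ) + 1) : ℝ) : EReal)} with hCdef
  have hsum : (∑' k, ν (C k)) ≠ ⊤ := by
    apply ne_top_of_le_ne_top _ (ENNReal.tsum_le_tsum (fun k => (hψ k).le))
    rw [ENNReal.tsum_geometric]
    simp [ENNReal.one_sub_inv_two]
  have hBC : ν (limsup C atTop) = 0 := measure_limsup_atTop_eq_zero hsum
  have h6 : ∀ᵐ s ∂ν, s ∉ limsup C atTop := by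
    rw [ae_iff]
    convert hBC using 2
    ext s
    simp
  have hae : ∀ᵐ s ∂ν, ∀ ε : ℝ, 0 < ε →
      ∀ᶠ k in atTop, ¬ (f (σ k) s ≤ ((g s : ℝ) : EReal) - (ε : EReal)) := by
    filter_upwards [h6] with s hs ε hε
    rw [mem_limsup_iff_frequently_mem, not_frequently] at hs
    obtain ⟨k₀, hk₀⟩ := exists_nat_one_div_lt hε
    filter_upwards [hs, eventually_ge_atTop k₀] with k hk1 hk2 hcontra
    apply hk1
    show f (σ k) s ≤ ((g s : ℝ) : EReal) - ((1 / ((k : ℝ) + 1) : ℝ) : EReal)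
    refine le_trans hcontra ?_
    rw [show ((g s : ℝ) : EReal) - (ε : EReal) = ((g s - ε : ℝ) : EReal) from
      (EReal.coe_sub _ _).symm, show ((g s : ℝ) : EReal) - ((1 / ((k : ℝ) + 1) : ℝ) : EReal)
      = ((g s - 1 / ((k : ℝ) + 1) : ℝ) : EReal) from (EReal.coe_sub _ _).symm,
      EReal.coe_le_coe_iff]
    have hk1k : (1 : ℝ) / ((k : ℝ) + 1) ≤ 1 / ((k₀ : ℝ) + 1) := by
      apply one_div_le_one_div_of_le (by positivity)
      have : (k₀ : ℝ) ≤ (k : ℝ) := by exact_mod_cast hk2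
      linarith
    linarith
  have hKev : ∀ᶠ K : ℝ in atTop,
      (limsup (fun n => tailIntegral (μ n) (fun s => max (-(f n s)) 0) K) atTop)
        < ENNReal.ofReal (θ / 4) :=
    haui.eventually_lt_const (ENNReal.ofReal_pos.mpr (by linarith))
  obtain ⟨K, hKtail, hK1⟩ := (hKev.and (eventually_ge_atTop 1)).exists
  have hK0 : (0 : ℝ) < K := by linarith
  have hE1 : ∀ᶠ k in atTop,
      tailIntegral (μ (σ k)) (fun s => max (-(f (σ k) s)) 0) K < ENNReal.ofReal (θ / 4) :=
    hσmono.tendsto_atTop.eventually (eventually_lt_of_limsup_lt hKtail)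
  have hδpos : (0 : ℝ) < θ / (4 * K) := by positivity
  have hE2 : ∀ᶠ k in atTop,
      μ (σ k) Set.univ < ν Set.univ + ENNReal.ofReal (θ / (4 * K)) :=
    hσmono.tendsto_atTop.eventually ((hsw Set.univ MeasurableSet.univ).eventually_lt_const
      (ENNReal.lt_add_right (measure_ne_top ν _)
        (ENNReal.ofReal_pos.mpr hδpos).ne'))
  set U : ℕ → ℝ≥0∞ :=
    fun k => ∫⁻ s, EReal.posENN (f (σ k) s + (K : EReal)) ∂(μ (σ k)) with hUdef
  have hswσ : SetwiseConv (fun k => μ (σ k)) ν :=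
    fun C hC => (hsw C hC).comp hσmono.tendsto_atTop
  have hmono' : Monotone (fun x : EReal => EReal.posENN (x + (K : EReal))) :=
    fun a b hab => FCS.posENN_mono (add_le_add_left hab _)
  have hUmeas : ∀ k, Measurable fun s => EReal.posENN (f (σ k) s + (K : EReal)) :=
    fun k => hmono'.measurable.comp (hf (σ k))
  have hliminfU : (∫⁻ s, ENNReal.ofReal (g s + K) ∂ν) ≤ liminf U atTop := by
    calc (∫⁻ s, ENNReal.ofReal (g s + K) ∂ν)
        ≤ ∫⁻ s, liminf (fun k => EReal.posENN (f (σ k) s + (K : EReal))) atTop ∂ν := by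
          apply lintegral_mono_ae
          filter_upwards [hae] with s hs
          exact FCS.liminf_pointwise hs K
      _ ≤ liminf U atTop := FCS.fatou_setwise hswσ _ hUmeas
  have hY := FCS.lemY ν g hg K hK0.le hdef'
  have hDν : ENNReal.ofReal K * ν Set.univ ≠ ⊤ :=
    ENNReal.mul_ne_top ENNReal.ofReal_ne_top (measure_ne_top ν _)
  have hlt : ((c' + (ENNReal.ofReal K * ν Set.univ).toReal : ℝ) : EReal)
      < ((∫⁻ s, ENNReal.ofReal (g s + K) ∂ν : ℝ≥0∞) : EReal) :=
    FCS.EReal_lt_sub hDν (lt_of_lt_of_le hc'I hY)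
  set ρ : ℝ := c' + (ENNReal.ofReal K * ν Set.univ).toReal with hρdef
  have hE3 : ∀ᶠ k in atTop, (ρ : EReal) < ((U k : ℝ≥0∞) : EReal) := by
    rcases lt_or_ge ρ 0 with hρneg | hρnn
    · apply Eventually.of_forall
      intro k
      calc (ρ : EReal) < ((0 : ℝ) : EReal) := EReal.coe_lt_coe_iff.mpr hρneg
        _ ≤ ((U k : ℝ≥0∞) : EReal) := by
            rw [show ((0 : ℝ) : EReal) = ((0 : ℝ≥0∞) : EReal) by simp]
            exact EReal.coe_ennreal_le_coe_ennreal_iff.mpr zero_le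
    · have hb : ENNReal.ofReal ρ < liminf U atTop := by
        rw [← EReal.coe_ennreal_lt_coe_ennreal_iff, FCS.coe_ennreal_ofReal_nonneg hρnn]
        exact lt_of_lt_of_le hlt (EReal.coe_ennreal_le_coe_ennreal_iff.mpr hliminfU)
      filter_upwards [eventually_lt_of_lt_liminf hb] with k hk
      calc (ρ : EReal) = ((ENNReal.ofReal ρ : ℝ≥0∞) : EReal) :=
            (FCS.coe_ennreal_ofReal_nonneg hρnn).symm
        _ < ((U k : ℝ≥0∞) : EReal) := EReal.coe_ennreal_lt_coe_ennreal_iff.mpr hk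
  have hfinal : ∀ᶠ k in atTop, (c : EReal) < eIntegral (μ (σ k)) (f (σ k)) := by
    filter_upwards [hE1, hE2, hE3] with k h1 h2 h3
    have hνtop : ν Set.univ + ENNReal.ofReal (θ / (4 * K)) ≠ ⊤ :=
      ENNReal.add_ne_top.mpr ⟨measure_ne_top ν _, ENNReal.ofReal_ne_top⟩
    have hμfin : μ (σ k) Set.univ ≠ ⊤ := ne_top_of_lt h2
    have hX := FCS.lemX (μ (σ k)) (f (σ k)) (hf _) K hK0 hμfin (hdef _) (ne_top_of_lt h1)
    refine lt_of_lt_of_le ?_ hX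
    apply FCS.final_lt (ENNReal.mul_ne_top ENNReal.ofReal_ne_top hμfin) (ne_top_of_lt h1)
    intro hU
    have hU' : ρ < (U k).toReal := by
      rw [FCS.coe_ennreal_eq hU, EReal.coe_lt_coe_iff] at h3
      exact h3
    have hoo : ENNReal.ofReal K * ENNReal.ofReal (θ / (4 * K)) ≠ ⊤ :=
      ENNReal.mul_ne_top ENNReal.ofReal_ne_top ENNReal.ofReal_ne_top
    have hD' : (ENNReal.ofReal K * μ (σ k) Set.univ).toReal
        ≤ (ENNReal.ofReal K * ν Set.univ).toReal + θ / 4 := by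
      have hle : ENNReal.ofReal K * μ (σ k) Set.univ
          ≤ ENNReal.ofReal K * ν Set.univ
            + ENNReal.ofReal K * ENNReal.ofReal (θ / (4 * K)) := by
        rw [← mul_add]
        exact mul_le_mul_right h2.le _
      have h8 := ENNReal.toReal_mono (ENNReal.add_ne_top.mpr ⟨hDν, hoo⟩) hle
      rw [ENNReal.toReal_add hDν hoo, ENNReal.toReal_mul (a := ENNReal.ofReal K)
        (b := ENNReal.ofReal (θ / (4 * K))), ENNReal.toReal_ofReal hK0.le,
        ENNReal.toReal_ofReal hδpos.le] at h8
      have h9 : K * (θ / (4 * K)) = θ / 4 := by field_simp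
      linarith
    have hT' : (tailIntegral (μ (σ k)) (fun s => max (-(f (σ k) s)) 0) K).toReal ≤ θ / 4 := by
      have h10 := ENNReal.toReal_mono ENNReal.ofReal_ne_top h1.le
      rwa [ENNReal.toReal_ofReal (by linarith : (0:ℝ) ≤ θ / 4)] at h10
    simp only [hρdef] at hU'
    linarith
  obtain ⟨k, hk⟩ := hfinal.exists
  exact absurd (hφlt (ψ k)) (not_lt.mpr hk.le)
end

section
/- Let (S, Σ) be a measurable space, {μ_n} a sequence of measures converging setwise to a finite measure μ, and {f_n} a sequence of measurable extended-real-valued functions on S that lower semi-converges to a measurable real-valued function f in measure μ. Suppose there exists a sequence of measurable real-valued functions {g_n} on S with f_n(s) ≥ g_n(s) for all n and all s ∈ S such that −∞ < ∫_S limsup_{n→∞} g_n(s) μ(ds) ≤ liminf_{n→∞} ∫_S g_n(s) μ_n(ds). Then ∫_S f(s) μ(ds) ≤ liminf_{n→∞} ∫_S f_n(s) μ_n(ds), provided all integrals appearing are defined. -/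
open MeasureTheory Filter Metric Topology
open scoped ENNReal

section FKLAux

open scoped NNReal

namespace FKL

@[simp] lemma posENN_bot : (⊥ : EReal).posENN = 0 := by
  simp [EReal.posENN, max_eq_right (bot_le (a := (0:EReal))), EReal.abs_zero]

@[simp] lemma posENN_top : (⊤ : EReal).posENN = ⊤ := by
  simp [EReal.posENN, max_eq_left (le_top (a := (0:EReal)))]

@[simp] lemma posENN_coe (r : ℝ) : ((r : ℝ) : EReal).posENN = ENNReal.ofReal r := by
  rcases le_total r 0 with h | h
  · rw [EReal.posENN, max_eq_right (by exact_mod_cast h), ENNReal.ofReal_eq_zero.2 h,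
      EReal.abs_zero]
  · rw [EReal.posENN, max_eq_left (by exact_mod_cast h), EReal.abs_def, abs_of_nonneg h]

lemma negENN_eq (x : EReal) : x.negENN = (-x).posENN := rfl

@[simp] lemma negENN_bot : (⊥ : EReal).negENN = ⊤ := by rw [negENN_eq]; simp
@[simp] lemma negENN_top : (⊤ : EReal).negENN = 0 := by rw [negENN_eq]; simp
@[simp] lemma negENN_coe (r : ℝ) : ((r : ℝ) : EReal).negENN = ENNReal.ofReal (-r) := by
  rw [negENN_eq, ← EReal.coe_neg, posENN_coe]

lemma abs_mono_of_nonneg {x y : EReal} (hx : 0 ≤ x) (hxy : x ≤ y) : x.abs ≤ y.abs := by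
  induction x using EReal.rec with
  | bot => exact absurd hx (by simp)
  | top => rw [top_le_iff.1 hxy]
  | coe a =>
    induction y using EReal.rec with
    | bot => exact absurd hxy (by simp)
    | top => simp
    | coe b =>
      rw [EReal.abs_def, EReal.abs_def]
      have ha : (0:ℝ) ≤ a := by exact_mod_cast hx
      have hab : a ≤ b := by exact_mod_cast hxy
      exact ENNReal.ofReal_le_ofReal
        (by rw [abs_of_nonneg ha, abs_of_nonneg (ha.trans hab)]; exact hab)

lemma posENN_mono {x y : EReal} (h : x ≤ y) : x.posENN ≤ y.posENN :=
  abs_mono_of_nonneg (le_max_right _ _) (max_le_max h le_rfl)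

lemma negENN_anti {x y : EReal} (h : x ≤ y) : y.negENN ≤ x.negENN := by
  rw [negENN_eq, negENN_eq]; exact posENN_mono (EReal.neg_le_neg_iff.2 h)

lemma measurable_posENN : Measurable EReal.posENN := by
  apply EReal.measurable_of_measurable_real (f := EReal.posENN)
  simp only [posENN_coe]
  exact ENNReal.measurable_ofReal.comp measurable_id

lemma measurable_negENN : Measurable EReal.negENN := by
  have : EReal.negENN = EReal.posENN ∘ (fun x => -x) := rfl
  rw [this]
  exact measurable_posENN.comp measurable_neg

/-- Pointwise inequality 1: if `↑r ≤ x` then `(x-r)⁺ + r⁺ + x⁻ ≤ x⁺ + r⁻`. -/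
lemma pointwise1 (x : EReal) (r : ℝ) (h : (r : EReal) ≤ x) :
    (x - (r : EReal)).posENN + ((r:ℝ) : EReal).posENN + x.negENN
      ≤ x.posENN + ((r:ℝ) : EReal).negENN := by
  induction x using EReal.rec with
  | bot => exact absurd h (by simp)
  | top => simp
  | coe a =>
    have har : r ≤ a := by exact_mod_cast h
    rw [← EReal.coe_sub, posENN_coe, posENN_coe, posENN_coe, negENN_coe, negENN_coe]
    rcases le_total 0 r with hr | hr
    · have ha : 0 ≤ a := hr.trans har
      rw [ENNReal.ofReal_eq_zero.2 (by linarith : -a ≤ 0), add_zero,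
        ← ENNReal.ofReal_add (by linarith) hr]
      exact le_add_right (ENNReal.ofReal_le_ofReal (by linarith))
    · rcases le_total 0 a with ha | ha
      · rw [ENNReal.ofReal_eq_zero.2 hr, ENNReal.ofReal_eq_zero.2 (by linarith : -a ≤ 0),
          add_zero, add_zero, ← ENNReal.ofReal_add (by linarith) (by linarith)]
        exact ENNReal.ofReal_le_ofReal (by linarith)
      · rw [ENNReal.ofReal_eq_zero.2 hr, add_zero, ENNReal.ofReal_eq_zero.2 ha,
          ← ENNReal.ofReal_add (by linarith) (by linarith), zero_add]
        exact ENNReal.ofReal_le_ofReal (by linarith)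

/-- Pointwise inequality 2: if `L ≠ ⊥` then `r⁺ + L⁻ ≤ (r - L)⁺ + L⁺ + r⁻`. -/
lemma pointwise2 (r : ℝ) (L : EReal) (h : L ≠ ⊥) :
    ((r:ℝ) : EReal).posENN + L.negENN
      ≤ ((r : EReal) - L).posENN + L.posENN + ((r:ℝ) : EReal).negENN := by
  induction L using EReal.rec with
  | bot => exact absurd rfl h
  | top => simp
  | coe l =>
    rw [← EReal.coe_sub, posENN_coe, posENN_coe, posENN_coe, negENN_coe, negENN_coe]
    rcases le_total r l with hrl | hrl
    · rcases le_total 0 r with hr | hr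
      · have hl : (0:ℝ) ≤ l := hr.trans hrl
        rw [ENNReal.ofReal_eq_zero.2 (by linarith : -l ≤ 0), add_zero]
        calc ENNReal.ofReal r ≤ ENNReal.ofReal l := ENNReal.ofReal_le_ofReal hrl
          _ ≤ ENNReal.ofReal (r - l) + ENNReal.ofReal l := le_add_self
          _ ≤ _ := self_le_add_right _ _
      · rcases le_total 0 l with hl | hl
        · rw [ENNReal.ofReal_eq_zero.2 hr, ENNReal.ofReal_eq_zero.2 (by linarith : -l ≤ 0),
            add_zero]
          exact zero_le
        · rw [ENNReal.ofReal_eq_zero.2 hr, zero_add]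
          calc ENNReal.ofReal (-l) ≤ ENNReal.ofReal (-r) :=
                ENNReal.ofReal_le_ofReal (by linarith)
            _ ≤ _ := le_add_self
    · rcases le_total 0 l with hl | hl
      · have hr : (0:ℝ) ≤ r := hl.trans hrl
        rw [ENNReal.ofReal_eq_zero.2 (by linarith : -l ≤ 0), add_zero,
          ENNReal.ofReal_eq_zero.2 (by linarith : -r ≤ 0), add_zero,
          ← ENNReal.ofReal_add (by linarith : (0:ℝ) ≤ r - l) hl]
        exact ENNReal.ofReal_le_ofReal (by linarith)
      · rcases le_total 0 r with hr | hr
        · rw [ENNReal.ofReal_eq_zero.2 hl, add_zero,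
            ENNReal.ofReal_eq_zero.2 (by linarith : -r ≤ 0), add_zero,
            ← ENNReal.ofReal_add hr (by linarith : (0:ℝ) ≤ -l)]
          exact ENNReal.ofReal_le_ofReal (by linarith)
        · rw [ENNReal.ofReal_eq_zero.2 hr, zero_add, ENNReal.ofReal_eq_zero.2 hl, add_zero,
            ← ENNReal.ofReal_add (by linarith : (0:ℝ) ≤ r - l) (by linarith : (0:ℝ) ≤ -r)]
          exact ENNReal.ofReal_le_ofReal (by linarith)

lemma coe_ennreal_real {B : ℝ≥0∞} (hB : B ≠ ⊤) : (B : EReal) = ((B.toReal : ℝ) : EReal) := by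
  obtain ⟨b, rfl⟩ : ∃ b : ℝ≥0, B = b := ⟨B.toNNReal, (ENNReal.coe_toNNReal hB).symm⟩
  rw [EReal.coe_nnreal_eq_coe_real, ENNReal.coe_toReal]

lemma rearrange (C D : EReal) (b e : ℝ) :
    C + D + (b : EReal) - (e : EReal) = C + (D - (e : EReal)) + (b : EReal) := by
  rw [sub_eq_add_neg, sub_eq_add_neg, add_assoc (C + D), add_comm ((b:EReal)) (-(e:EReal)),
    ← add_assoc (C + D), add_assoc C D]

lemma ereal_key {A B C D E : ℝ≥0∞} (hB : B ≠ ⊤) (hE : E ≠ ⊤) (h : A + E ≤ C + D + B) :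
    (A : EReal) - (B : EReal) ≤ (C : EReal) + ((D : EReal) - (E : EReal)) := by
  rw [coe_ennreal_real hB, coe_ennreal_real hE]
  rw [EReal.sub_le_iff_le_add (.inl (EReal.coe_ne_bot _)) (.inl (EReal.coe_ne_top _))]
  have h' : (A : EReal) + (E.toReal : ℝ) ≤ (C : EReal) + D + (B.toReal : ℝ) := by
    rw [← coe_ennreal_real hB, ← coe_ennreal_real hE, ← EReal.coe_ennreal_add,
      ← EReal.coe_ennreal_add, ← EReal.coe_ennreal_add]
    exact EReal.coe_ennreal_le_coe_ennreal_iff.2 h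
  have h'' : (A : EReal) ≤ (C : EReal) + D + (B.toReal : ℝ) - (E.toReal : ℝ) :=
    (EReal.le_sub_iff_add_le (.inl (EReal.coe_ne_bot _)) (.inl (EReal.coe_ne_top _))).2 h'
  rwa [rearrange] at h''

lemma ereal_key2 {A B C D E : ℝ≥0∞} (hB : B ≠ ⊤) (hE : E ≠ ⊤) (h : C + D + B ≤ A + E) :
    (C : EReal) + ((D : EReal) - (E : EReal)) ≤ (A : EReal) - (B : EReal) := by
  rw [coe_ennreal_real hB, coe_ennreal_real hE]
  refine (EReal.le_sub_iff_add_le (.inl (EReal.coe_ne_bot _)) (.inl (EReal.coe_ne_top _))).2 ?_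
  have h' : (C : EReal) + D + (B.toReal : ℝ) ≤ (A : EReal) + (E.toReal : ℝ) := by
    rw [← coe_ennreal_real hB, ← coe_ennreal_real hE, ← EReal.coe_ennreal_add,
      ← EReal.coe_ennreal_add, ← EReal.coe_ennreal_add]
    exact EReal.coe_ennreal_le_coe_ennreal_iff.2 h
  have h'' : (C : EReal) + D + (B.toReal : ℝ) - (E.toReal : ℝ) ≤ (A : EReal) :=
    (EReal.sub_le_iff_le_add (.inl (EReal.coe_ne_bot _)) (.inl (EReal.coe_ne_top _))).2 h'
  rwa [rearrange] at h''

variable {S : Type*} [MeasurableSpace S] {μ : ℕ → Measure S} {ν : Measure S}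

lemma simpleFunc_tendsto_setwise (hsw : SetwiseConv μ ν) (φ : SimpleFunc S ℝ≥0) :
    Tendsto (fun n => (φ.map ((↑) : ℝ≥0 → ℝ≥0∞)).lintegral (μ n)) atTop
      (𝓝 ((φ.map ((↑) : ℝ≥0 → ℝ≥0∞)).lintegral ν)) := by
  simp_rw [SimpleFunc.map_lintegral]
  exact tendsto_finset_sum _ fun x _ =>
    ENNReal.Tendsto.const_mul (hsw _ (φ.measurableSet_fiber x)) (Or.inr ENNReal.coe_ne_top)

lemma lintegral_le_liminf_setwise (hsw : SetwiseConv μ ν) {h : S → ℝ≥0∞} :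
    ∫⁻ s, h s ∂ν ≤ liminf (fun n => ∫⁻ s, h s ∂(μ n)) atTop := by
  rw [lintegral_eq_nnreal h ν]
  refine iSup₂_le fun φ hφ => ?_
  have h1 : ∀ n, (φ.map ((↑) : ℝ≥0 → ℝ≥0∞)).lintegral (μ n) ≤ ∫⁻ s, h s ∂(μ n) := fun n => by
    rw [← SimpleFunc.lintegral_eq_lintegral]
    exact lintegral_mono fun x => hφ x
  have h2 := (simpleFunc_tendsto_setwise hsw φ).liminf_eq
  rw [← h2]
  exact liminf_le_liminf (Eventually.of_forall h1)

lemma fatou_setwise (hsw : SetwiseConv μ ν) {h : ℕ → S → ℝ≥0∞} (hmeas : ∀ n, Measurable (h n))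
    {H : S → ℝ≥0∞} (hH : ∀ᵐ s ∂ν, H s ≤ liminf (fun n => h n s) atTop) :
    ∫⁻ s, H s ∂ν ≤ liminf (fun n => ∫⁻ s, h n s ∂(μ n)) atTop := by
  have hm : ∀ m : ℕ, Measurable (fun s => ⨅ i, ⨅ (_ : i ≥ m), h i s) := fun m =>
    Measurable.iInf fun i => Measurable.iInf fun _ => hmeas i
  calc ∫⁻ s, H s ∂ν ≤ ∫⁻ s, liminf (fun n => h n s) atTop ∂ν := lintegral_mono_ae hH
    _ = ⨆ m, ∫⁻ s, ⨅ i, ⨅ (_ : i ≥ m), h i s ∂ν := by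
        simp_rw [liminf_eq_iSup_iInf_of_nat]
        exact lintegral_iSup hm fun m m' hmm => fun s =>
          le_iInf₂ fun i hi => iInf₂_le i (hmm.trans hi)
    _ ≤ liminf (fun n => ∫⁻ s, h n s ∂(μ n)) atTop := by
        refine iSup_le fun m => le_trans (lintegral_le_liminf_setwise hsw) ?_
        refine liminf_le_liminf (eventually_atTop.2 ⟨m, fun n hn => ?_⟩)
        exact lintegral_mono fun s => iInf₂_le n hn

end FKL

end FKLAux

/-- Fatou's lemma in its classic form for setwise converging measures, minorant version
(Corollary 4.3). -/
theorem fatou_classic_setwise_minorant {S : Type*} [MeasurableSpace S]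
    (μ : ℕ → Measure S) (ν : Measure S) [IsFiniteMeasure ν] (hsw : SetwiseConv μ ν)
    (f : ℕ → S → EReal) (hf : ∀ n, Measurable (f n))
    (g : S → ℝ) (hg : Measurable g)
    (hconv : LowerSemiConvInMeasureE f g ν)
    (G : ℕ → S → ℝ) (hG : ∀ n, Measurable (G n))
    (hfG : ∀ n s, ((G n s : ℝ) : EReal) ≤ f n s)
    (hGbd : (⊥ : EReal) < eIntegral ν (fun s => limsup (fun n => ((G n s : ℝ) : EReal)) atTop))
    (hGle : eIntegral ν (fun s => limsup (fun n => ((G n s : ℝ) : EReal)) atTop)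
      ≤ liminf (fun n => eIntegral (μ n) (fun s => ((G n s : ℝ) : EReal))) atTop)
    (hdef : ∀ n, IntegralDefined (μ n) (f n))
    (hdef' : IntegralDefined ν (fun s => ((g s : ℝ) : EReal)))
    (hdefG : ∀ n, IntegralDefined (μ n) (fun s => ((G n s : ℝ) : EReal)))
    (hdefG' : IntegralDefined ν (fun s => limsup (fun n => ((G n s : ℝ) : EReal)) atTop)) :
    eIntegral ν (fun s => ((g s : ℝ) : EReal))
      ≤ liminf (fun n => eIntegral (μ n) (f n)) atTop := by
    classical
  -- continuity facts for EReal addition with a real coordinate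
  have contAdd : Continuous (fun p : EReal × ℝ => p.1 + ((p.2 : ℝ) : EReal)) := by
    rw [continuous_iff_continuousAt]; intro p
    have h1 : ContinuousAt (fun q : EReal × EReal => q.1 + q.2) (p.1, ((p.2 : ℝ) : EReal)) :=
      EReal.continuousAt_add (Or.inr (EReal.coe_ne_bot _)) (Or.inr (EReal.coe_ne_top _))
    have h2 : ContinuousAt (fun p : EReal × ℝ => (p.1, ((p.2 : ℝ) : EReal))) p :=
      (continuous_fst.prodMk (continuous_coe_real_ereal.comp continuous_snd)).continuousAt
    exact ContinuousAt.comp (f := fun p : EReal × ℝ => (p.1, ((p.2 : ℝ) : EReal))) h1 h2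
  have contAdd2 : Continuous (fun p : ℝ × EReal => ((p.1 : ℝ) : EReal) + p.2) := by
    rw [continuous_iff_continuousAt]; intro p
    have h1 : ContinuousAt (fun q : EReal × EReal => q.1 + q.2) (((p.1 : ℝ) : EReal), p.2) :=
      EReal.continuousAt_add (Or.inl (EReal.coe_ne_top _)) (Or.inl (EReal.coe_ne_bot _))
    have h2 : ContinuousAt (fun p : ℝ × EReal => (((p.1 : ℝ) : EReal), p.2)) p :=
      ((continuous_coe_real_ereal.comp continuous_fst).prodMk continuous_snd).continuousAt
    exact ContinuousAt.comp (f := fun p : ℝ × EReal => (((p.1 : ℝ) : EReal), p.2)) h1 h2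
  set L : S → EReal := fun s => limsup (fun n => ((G n s : ℝ) : EReal)) atTop with hLdef
  have hLmeas : Measurable L := Measurable.limsup fun n => (hG n).coe_real_ereal
  -- the negative part of L has finite integral
  have hE : (∫⁻ s, (L s).negENN ∂ν) ≠ ⊤ := by
    intro hEtop
    rw [eIntegral, hEtop] at hGbd
    simp only [EReal.coe_ennreal_top, EReal.sub_top, lt_self_iff_false] at hGbd
  have hLbot : ∀ᵐ s ∂ν, L s ≠ ⊥ := by
    filter_upwards [ae_lt_top (FKL.measurable_negENN.comp hLmeas) hE] with s hs
    intro hbot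
    rw [Function.comp_apply, hbot] at hs
    simp at hs
  set x : ℕ → EReal := fun n => eIntegral (μ n) (f n) with hxdef
  by_cases htop : liminf x atTop = ⊤
  · rw [show liminf (fun n => eIntegral (μ n) (f n)) atTop = liminf x atTop from rfl, htop]
    exact le_top
  -- a sequence of upper bounds converging down to the liminf
  obtain ⟨b, hb1, hb2⟩ : ∃ b : ℕ → EReal,
      (∀ k, ∃ᶠ m in atTop, x m < b k) ∧ liminf b atTop ≤ liminf x atTop := by
    by_cases hbot : liminf x atTop = ⊥
    · refine ⟨fun k => ((-(k : ℝ) : ℝ) : EReal), fun k => frequently_lt_of_liminf_lt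
        (by isBoundedDefault) (by rw [hbot]; exact EReal.bot_lt_coe _), ?_⟩
      have htb : Tendsto (fun k : ℕ => ((-(k : ℝ) : ℝ) : EReal)) atTop (𝓝 ⊥) := by
        refine EReal.nhds_bot_basis.tendsto_right_iff.2 fun y _ => ?_
        filter_upwards [eventually_gt_atTop ⌈-y⌉₊] with k hk
        have h1 : -y < (k : ℝ) := lt_of_le_of_lt (Nat.le_ceil (-y)) (by exact_mod_cast hk)
        simp only [Set.mem_Iio]
        exact EReal.coe_lt_coe_iff.2 (by linarith)
      rw [htb.liminf_eq, hbot]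
    · set r : ℝ := (liminf x atTop).toReal with hrdef
      have hr : ((r : ℝ) : EReal) = liminf x atTop := EReal.coe_toReal htop hbot
      refine ⟨fun k => ((r + 1 / ((k : ℝ) + 1) : ℝ) : EReal), fun k =>
        frequently_lt_of_liminf_lt (by isBoundedDefault) ?_, ?_⟩
      · rw [← hr]
        exact EReal.coe_lt_coe_iff.2 (lt_add_of_pos_right r (by positivity))
      · have htb : Tendsto (fun k : ℕ => ((r + 1 / ((k : ℝ) + 1) : ℝ) : EReal)) atTop
            (𝓝 ((r : ℝ) : EReal)) := by
          rw [EReal.tendsto_coe]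
          simpa using tendsto_const_nhds.add (tendsto_one_div_add_atTop_nhds_zero_nat (𝕜 := ℝ))
        rw [htb.liminf_eq, hr]
  -- extract a subsequence
  have hfreq : ∀ k : ℕ, ∃ᶠ m in atTop, x m < b k ∧
      ν {s | f m s ≤ ((g s : ℝ) : EReal) - ((1 / ((k : ℝ) + 1) : ℝ) : EReal)}
        < (2⁻¹ : ℝ≥0∞) ^ k := by
    intro k
    have hpos : (0 : ℝ≥0∞) < 2⁻¹ ^ k :=
      ENNReal.pow_pos (ENNReal.inv_pos.2 (by norm_num)) k
    exact (hb1 k).and_eventually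
      ((hconv (1 / ((k : ℝ) + 1)) (by positivity)).eventually_lt_const hpos)
  obtain ⟨φ, φmono, hφ⟩ := Filter.extraction_forall_of_frequently hfreq
  have hmapφ : map φ atTop ≤ atTop := φmono.tendsto_atTop
  have hswφ : SetwiseConv (fun k => μ (φ k)) ν := fun C hC =>
    (hsw C hC).comp φmono.tendsto_atTop
  -- Borel--Cantelli
  set A : ℕ → Set S := fun k =>
    {s | f (φ k) s ≤ ((g s : ℝ) : EReal) - ((1 / ((k : ℝ) + 1) : ℝ) : EReal)} with hAdef
  have hsum : (∑' k, ν (A k)) ≠ ⊤ := by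
    have h1 : (∑' k, ν (A k)) ≤ ∑' k, (2⁻¹ : ℝ≥0∞) ^ k :=
      ENNReal.tsum_le_tsum fun k => (hφ k).2.le
    rw [ENNReal.tsum_geometric, ENNReal.one_sub_inv_two] at h1
    exact ne_top_of_le_ne_top (by simp) h1
  have hae : ∀ᵐ s ∂ν, ∀ᶠ k in atTop, s ∉ A k := ae_eventually_notMem hsum
  -- measurability of the nonnegative differences
  have hqmeasE : ∀ n, Measurable (fun s => f n s - ((G n s : ℝ) : EReal)) := by
    intro n
    have heq : (fun s => f n s - ((G n s : ℝ) : EReal))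
        = fun s => f n s + (((-(G n s) : ℝ)) : EReal) := by
      funext s; rw [sub_eq_add_neg, EReal.coe_neg]
    rw [heq]
    exact contAdd.measurable.comp ((hf n).prodMk (hG n).neg)
  set q : ℕ → S → ℝ≥0∞ := fun k s => (f (φ k) s - ((G (φ k) s : ℝ) : EReal)).posENN with hqdef
  have hqmeas : ∀ k, Measurable (q k) := fun k =>
    FKL.measurable_posENN.comp (hqmeasE (φ k))
  -- measurability of H
  set H : S → ℝ≥0∞ := fun s => (((g s : ℝ) : EReal) - L s).posENN with hHdef
  have hHmeas : Measurable H := by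
    have heq : (fun s => ((g s : ℝ) : EReal) - L s) = fun s => ((g s : ℝ) : EReal) + (- L s) := by
      funext s; rw [sub_eq_add_neg]
    exact FKL.measurable_posENN.comp
      (heq ▸ contAdd2.measurable.comp (hg.prodMk (continuous_neg.measurable.comp hLmeas)))
  -- Step M1: per-index lower bound for the integral of f n
  have M1 : ∀ n, ((∫⁻ s, (f n s - ((G n s : ℝ) : EReal)).posENN ∂(μ n) : ℝ≥0∞) : EReal)
      + eIntegral (μ n) (fun s => ((G n s : ℝ) : EReal)) ≤ eIntegral (μ n) (f n) := by
    intro n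
    have hBE : (∫⁻ s, (f n s).negENN ∂(μ n)) ≤ ∫⁻ s, ((G n s : ℝ) : EReal).negENN ∂(μ n) :=
      lintegral_mono fun s => FKL.negENN_anti (hfG n s)
    by_cases hEtop : (∫⁻ s, ((G n s : ℝ) : EReal).negENN ∂(μ n)) = ⊤
    · rw [eIntegral, hEtop]
      simp only [EReal.coe_ennreal_top, EReal.sub_top, EReal.add_bot]
      exact bot_le
    · rw [eIntegral, eIntegral]
      refine FKL.ereal_key2 (ne_top_of_le_ne_top hEtop hBE) hEtop ?_
      have hpoint : (∫⁻ s, (f n s - ((G n s : ℝ) : EReal)).posENN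
            + ((G n s : ℝ) : EReal).posENN + (f n s).negENN ∂(μ n))
          ≤ ∫⁻ s, (f n s).posENN + ((G n s : ℝ) : EReal).negENN ∂(μ n) :=
        lintegral_mono fun s => FKL.pointwise1 (f n s) (G n s) (hfG n s)
      rwa [lintegral_add_right (g := fun s => (f n s).negENN) _
          (FKL.measurable_negENN.comp (hf n)),
        lintegral_add_right (g := fun s => ((G n s : ℝ) : EReal).posENN) _
          (FKL.measurable_posENN.comp (hG n).coe_real_ereal),
        lintegral_add_right (g := fun s => ((G n s : ℝ) : EReal).negENN) _
          (FKL.measurable_negENN.comp (hG n).coe_real_ereal)] at hpoint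
  -- Step M2: comparison of the integral of g with that of H and L
  have M2 : eIntegral ν (fun s => ((g s : ℝ) : EReal))
      ≤ ((∫⁻ s, H s ∂ν : ℝ≥0∞) : EReal) + eIntegral ν L := by
    by_cases hgneg : (∫⁻ s, ((g s : ℝ) : EReal).negENN ∂ν) = ⊤
    · rw [eIntegral, hgneg]
      simp only [EReal.coe_ennreal_top, EReal.sub_top]
      exact bot_le
    · rw [eIntegral, eIntegral]
      refine FKL.ereal_key hgneg hE ?_
      have hpoint : (∫⁻ s, ((g s : ℝ) : EReal).posENN + (L s).negENN ∂ν)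
          ≤ ∫⁻ s, (((g s : ℝ) : EReal) - L s).posENN + (L s).posENN
            + ((g s : ℝ) : EReal).negENN ∂ν := by
        refine lintegral_mono_ae ?_
        filter_upwards [hLbot] with s hs
        exact FKL.pointwise2 (g s) (L s) hs
      rwa [lintegral_add_right (g := fun s => (L s).negENN) _
          (FKL.measurable_negENN.comp hLmeas),
        lintegral_add_right (g := fun s => ((g s : ℝ) : EReal).negENN) _
          (FKL.measurable_negENN.comp hg.coe_real_ereal),
        lintegral_add_right (g := fun s => (L s).posENN) _
          (FKL.measurable_posENN.comp hLmeas)] at hpoint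
  -- a.e. pointwise lower bound for liminf of q
  have hH : ∀ᵐ s ∂ν, H s ≤ liminf (fun k => q k s) atTop := by
    filter_upwards [hae, hLbot] with s hs hsbot
    by_cases hLt : L s = ⊤
    · rw [hHdef]
      simp only [hLt, EReal.sub_top, FKL.posENN_bot]
      exact zero_le
    · set l : ℝ := (L s).toReal with hldef
      have hls : ((l : ℝ) : EReal) = L s := EReal.coe_toReal hLt hsbot
      have Hval : H s = ENNReal.ofReal (g s - l) := by
        rw [hHdef]
        simp only [← hls, ← EReal.coe_sub, FKL.posENN_coe]
      have hGlimsup : limsup (fun k => ((G (φ k) s : ℝ) : EReal)) atTop ≤ L s := by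
        rw [hLdef, show (fun k => ((G (φ k) s : ℝ) : EReal))
          = (fun n => ((G n s : ℝ) : EReal)) ∘ φ from rfl, limsup_comp]
        exact limsup_le_limsup_of_le hmapφ isCobounded_le_of_bot isBounded_le_of_top
      have main : ∀ m : ℕ, ENNReal.ofReal (g s - l - 2 * (1 / ((m : ℝ) + 1)))
          ≤ liminf (fun k => q k s) atTop := by
        intro m
        set δ : ℝ := 1 / ((m : ℝ) + 1) with hδdef
        have hδ : 0 < δ := by positivity
        have h1 : ∀ᶠ k in atTop, ((G (φ k) s : ℝ) : EReal) < ((l + δ : ℝ) : EReal) := by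
          refine eventually_lt_of_limsup_lt (lt_of_le_of_lt hGlimsup ?_)
          rw [← hls]
          exact EReal.coe_lt_coe_iff.2 (by linarith)
        have h2 : ∀ᶠ (k : ℕ) in atTop, (1 : ℝ) / ((k : ℝ) + 1) ≤ δ := by
          filter_upwards [eventually_ge_atTop m] with k hk
          rw [hδdef]
          have : (m : ℝ) ≤ (k : ℝ) := by exact_mod_cast hk
          apply one_div_le_one_div_of_le (by positivity) (by linarith)
        refine le_liminf_of_le (by isBoundedDefault) ?_
        filter_upwards [hs, h1, h2] with k hk1 hk2 hk3
        have hk1' : ((g s : ℝ) : EReal) - ((1 / ((k : ℝ) + 1) : ℝ) : EReal) < f (φ k) s :=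
          not_le.1 hk1
        have e1 : ((g s - δ : ℝ) : EReal) ≤ f (φ k) s := by
          refine le_of_lt (lt_of_le_of_lt ?_ hk1')
          rw [← EReal.coe_sub]
          exact EReal.coe_le_coe_iff.2 (by linarith)
        have e2 : ((-(l + δ) : ℝ) : EReal) ≤ -((G (φ k) s : ℝ) : EReal) := by
          rw [← EReal.coe_neg]
          exact EReal.coe_le_coe_iff.2 (by have := EReal.coe_lt_coe_iff.1 hk2; linarith)
        have e3 : ((g s - δ - (l + δ) : ℝ) : EReal)
            ≤ f (φ k) s - ((G (φ k) s : ℝ) : EReal) := by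
          rw [sub_eq_add_neg (f (φ k) s), show ((g s - δ - (l + δ) : ℝ) : EReal)
            = ((g s - δ : ℝ) : EReal) + ((-(l + δ) : ℝ) : EReal) by
              rw [← EReal.coe_add]; exact congrArg _ (by ring)]
          exact add_le_add e1 e2
        calc ENNReal.ofReal (g s - l - 2 * (1 / ((m : ℝ) + 1)))
            = ((g s - δ - (l + δ) : ℝ) : EReal).posENN := by
              rw [FKL.posENN_coe]
              congr 1
              rw [hδdef]; ring
          _ ≤ q k s := FKL.posENN_mono e3
      have htend : Tendsto (fun m : ℕ => ENNReal.ofReal (g s - l - 2 * (1 / ((m : ℝ) + 1))))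
          atTop (𝓝 (ENNReal.ofReal (g s - l))) := by
        refine (ENNReal.continuous_ofReal.tendsto _).comp ?_
        have : Tendsto (fun m : ℕ => 2 * (1 / ((m : ℝ) + 1))) atTop (𝓝 0) := by
          simpa using (tendsto_one_div_add_atTop_nhds_zero_nat (𝕜 := ℝ)).const_mul (2 : ℝ)
        simpa using tendsto_const_nhds.sub this
      rw [Hval]
      exact le_of_tendsto htend (Eventually.of_forall main)
  -- main chain of inequalities
  have key1 : (∫⁻ s, H s ∂ν) ≤ liminf (fun k => ∫⁻ s, q k s ∂(μ (φ k))) atTop :=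
    FKL.fatou_setwise hswφ hqmeas hH
  have key1' : ((∫⁻ s, H s ∂ν : ℝ≥0∞) : EReal)
      ≤ liminf (fun k => ((∫⁻ s, q k s ∂(μ (φ k)) : ℝ≥0∞) : EReal)) atTop := by
    have hmap := Monotone.map_liminf_of_continuousAt (F := atTop)
      (f := ((↑) : ℝ≥0∞ → EReal)) EReal.coe_ennreal_strictMono.monotone
      (fun k => ∫⁻ s, q k s ∂(μ (φ k))) (continuous_coe_ennreal_ereal.continuousAt)
    calc ((∫⁻ s, H s ∂ν : ℝ≥0∞) : EReal)
        ≤ ((liminf (fun k => ∫⁻ s, q k s ∂(μ (φ k))) atTop : ℝ≥0∞) : EReal) :=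
          EReal.coe_ennreal_le_coe_ennreal_iff.2 key1
      _ = liminf (fun k => ((∫⁻ s, q k s ∂(μ (φ k)) : ℝ≥0∞) : EReal)) atTop := hmap
  have key2 : eIntegral ν L ≤
      liminf (fun k => eIntegral (μ (φ k)) (fun s => ((G (φ k) s : ℝ) : EReal))) atTop := by
    refine le_trans hGle ?_
    rw [show (fun k => eIntegral (μ (φ k)) (fun s => ((G (φ k) s : ℝ) : EReal)))
      = (fun n => eIntegral (μ n) (fun s => ((G n s : ℝ) : EReal))) ∘ φ from rfl, liminf_comp]
    exact liminf_le_liminf_of_le hmapφ isBounded_ge_of_bot isCobounded_ge_of_top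
  have chain : eIntegral ν (fun s => ((g s : ℝ) : EReal)) ≤ liminf (fun k => x (φ k)) atTop := by
    refine M2.trans ?_
    refine (add_le_add key1' key2).trans ?_
    refine le_trans EReal.le_liminf_add ?_
    exact liminf_le_liminf (Eventually.of_forall fun k => M1 (φ k))
  have final : liminf (fun k => x (φ k)) atTop ≤ liminf x atTop :=
    le_trans (liminf_le_liminf (Eventually.of_forall fun k => (hφ k).1.le)) hb2
  exact chain.trans final
end
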